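/- arXiv:2407.11411 — 3 statements merged into one kernel-verified Lean document; each statement's English description precedes it below -/
import Mathlib

section
/- Let r, s ≥ 3 be integers with at least one of r, s odd. If the pair (Γ(r,s), G(r,s)) is basic of cycle type, then (r,s) = (4,p), (p,4), or (p,q) for some odd primes p and q. -/
open SimpleGraph

namespace OG4

variable {V : Type*} {W : Type*}

/-! ### Normal quotients, cycles, and basic pairs -/

/-- The setoid of orbits of a group `N` of permutations of `V`. -/
def orbitSetoid (N : Subgroup (Equiv.Perm V)) : Setoid V := MulAction.orbitRel N V

/-- The (normal) quotient graph of a graph `Γ` with respect to a group `N` of permutations: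
its vertices are the `N`-orbits, two distinct orbits being adjacent iff some vertex of one is
adjacent in `Γ` to some vertex of the other. -/
def quotientGraph (Γ : SimpleGraph V) (N : Subgroup (Equiv.Perm V)) :
    SimpleGraph (Quotient (orbitSetoid N)) :=
  SimpleGraph.fromRel fun a b =>
    ∃ x y : V, Quotient.mk (orbitSetoid N) x = a ∧ Quotient.mk (orbitSetoid N) y = b ∧ Γ.Adj x y

/-- `N` is a normal subgroup of the subgroup `G` (of some ambient group). -/
def NormalIn {G : Type*} [Group G] (N H : Subgroup G) : Prop :=
  N ≤ H ∧ ∀ h ∈ H, ∀ n ∈ N, h * n * h⁻¹ ∈ N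

/-- A graph is isomorphic to a cycle graph `C_m` for some `m ≥ 3`. -/
def IsoCycle (Δ : SimpleGraph W) : Prop :=
  ∃ m : ℕ, 3 ≤ m ∧ Nonempty (Δ ≃g SimpleGraph.cycleGraph m)

/-- Every normal quotient of `(Γ, G)` relative to a nontrivial normal subgroup is degenerate:
it has at most 2 vertices or is a cycle. -/
def IsBasic (Γ : SimpleGraph V) (G : Subgroup (Equiv.Perm V)) : Prop :=
  ∀ N : Subgroup (Equiv.Perm V), NormalIn N G → N ≠ ⊥ →
    Nat.card (Quotient (orbitSetoid N)) ≤ 2 ∨ IsoCycle (quotientGraph Γ N)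

/-- `(Γ, G)` is basic of cycle type. -/
def BasicOfCycleType (Γ : SimpleGraph V) (G : Subgroup (Equiv.Perm V)) : Prop :=
  IsBasic Γ G ∧
    ∃ N : Subgroup (Equiv.Perm V), NormalIn N G ∧ N ≠ ⊥ ∧ IsoCycle (quotientGraph Γ N)

/-- The kernel of the action of `G` on the set of `N`-orbits. -/
def orbitKernel (G N : Subgroup (Equiv.Perm V)) : Subgroup (Equiv.Perm V) where
  carrier := {g | g ∈ G ∧ ∀ x : V,
    Quotient.mk (orbitSetoid N) (g x) = Quotient.mk (orbitSetoid N) x}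
  one_mem' := ⟨G.one_mem, fun x => by simp⟩
  mul_mem' := by
    rintro a b ⟨haG, ha⟩ ⟨hbG, hb⟩
    refine ⟨G.mul_mem haG hbG, fun x => ?_⟩
    rw [Equiv.Perm.mul_apply, ha (b x), hb x]
  inv_mem' := by
    rintro a ⟨haG, ha⟩
    refine ⟨G.inv_mem haG, fun x => ?_⟩
    have h := ha (a⁻¹ x)
    rw [show a (a⁻¹ x) = x by simp] at h
    exact h.symm

/-- `(Γ, G)` has a pair of independent cyclic normal quotients. -/
def HasIndepCyclicQuotients (Γ : SimpleGraph V) (G : Subgroup (Equiv.Perm V)) : Prop :=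
  ∃ N M : Subgroup (Equiv.Perm V), NormalIn N G ∧ NormalIn M G ∧
    IsoCycle (quotientGraph Γ N) ∧ IsoCycle (quotientGraph Γ M) ∧
    ¬ IsoCycle (quotientGraph Γ (orbitKernel G N ⊓ orbitKernel G M))

/-- `(Γ, G)` is basic of independent-cycle type. -/
def BasicOfIndependentCycleType (Γ : SimpleGraph V) (G : Subgroup (Equiv.Perm V)) : Prop :=
  IsBasic Γ G ∧ HasIndepCyclicQuotients Γ G

/-- Isomorphism of graph-group pairs: a graph isomorphism conjugating one group onto the other. -/
def PairIso (Γ : SimpleGraph V) (G : Subgroup (Equiv.Perm V))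
    (Δ : SimpleGraph W) (H : Subgroup (Equiv.Perm W)) : Prop :=
  ∃ e : Γ ≃g Δ, ∀ h : Equiv.Perm W, h ∈ H ↔ ∃ g ∈ G, e.toEquiv.permCongr g = h

/-! ### Minimal normal subgroups -/

/-- `M` is a minimal normal subgroup of the ambient group. -/
def IsMinimalNormal {G : Type*} [Group G] (M : Subgroup G) : Prop :=
  M.Normal ∧ M ≠ ⊥ ∧ ∀ N : Subgroup G, N.Normal → N ≤ M → N = ⊥ ∨ N = M

/-- `M` is a minimal normal subgroup of the subgroup `H`. -/
def IsMinimalNormalIn {G : Type*} [Group G] (M H : Subgroup G) : Prop :=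
  NormalIn M H ∧ M ≠ ⊥ ∧ ∀ N : Subgroup G, NormalIn N H → N ≤ M → N = ⊥ ∨ N = M

/-! ### The graphs `Γ(r,s)` and their automorphisms -/

/-- In `Γ(r,s)`, the vertex `(i,j)` is joined to the four vertices `(i ± 1, j ± 1)`. -/
def gammaRel (r s : ℕ) (x y : ZMod r × ZMod s) : Prop :=
  (y.1 = x.1 + 1 ∨ y.1 = x.1 - 1) ∧ (y.2 = x.2 + 1 ∨ y.2 = x.2 - 1)

/-- The graph `Γ(r,s)` on `ℤ_r × ℤ_s`. -/
def Gamma (r s : ℕ) : SimpleGraph (ZMod r × ZMod s) := SimpleGraph.fromRel (gammaRel r s)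

/-- `μ : (i,j) ↦ (i+1, j)`. -/
def mu (r s : ℕ) : Equiv.Perm (ZMod r × ZMod s) :=
  (Equiv.addRight (1 : ZMod r)).prodCongr (Equiv.refl (ZMod s))

/-- `ν : (i,j) ↦ (i, j+1)`. -/
def nu (r s : ℕ) : Equiv.Perm (ZMod r × ZMod s) :=
  (Equiv.refl (ZMod r)).prodCongr (Equiv.addRight (1 : ZMod s))

/-- `σ : (i,j) ↦ (-i, j)`. -/
def sigma (r s : ℕ) : Equiv.Perm (ZMod r × ZMod s) :=
  (Equiv.neg (ZMod r)).prodCongr (Equiv.refl (ZMod s))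

/-- `τ : (i,j) ↦ (-i, -j)`. -/
def tau (r s : ℕ) : Equiv.Perm (ZMod r × ZMod s) :=
  (Equiv.neg (ZMod r)).prodCongr (Equiv.neg (ZMod s))

/-- `σν : (i,j) ↦ (-i, j+1)`. -/
def sigmaNu (r s : ℕ) : Equiv.Perm (ZMod r × ZMod s) :=
  (Equiv.neg (ZMod r)).prodCongr (Equiv.addRight (1 : ZMod s))

/-- `μν : (i,j) ↦ (i+1, j+1)`. -/
def muNu (r s : ℕ) : Equiv.Perm (ZMod r × ZMod s) :=
  (Equiv.addRight (1 : ZMod r)).prodCongr (Equiv.addRight (1 : ZMod s))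

/-- `σμν : (i,j) ↦ (-(i+1), j+1)`. -/
def sigmaMuNu (r s : ℕ) : Equiv.Perm (ZMod r × ZMod s) :=
  ((Equiv.addRight (1 : ZMod r)).trans (Equiv.neg (ZMod r))).prodCongr
    (Equiv.addRight (1 : ZMod s))

/-- `μ² : (i,j) ↦ (i+2, j)`. -/
def muSq (r s : ℕ) : Equiv.Perm (ZMod r × ZMod s) :=
  (Equiv.addRight (2 : ZMod r)).prodCongr (Equiv.refl (ZMod s))

/-- `ν² : (i,j) ↦ (i, j+2)`. -/
def nuSq (r s : ℕ) : Equiv.Perm (ZMod r × ZMod s) :=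
  (Equiv.refl (ZMod r)).prodCongr (Equiv.addRight (2 : ZMod s))

/-- `μ^k : (i,j) ↦ (i+k, j)`. -/
def muPow (r s k : ℕ) : Equiv.Perm (ZMod r × ZMod s) :=
  (Equiv.addRight ((k : ZMod r))).prodCongr (Equiv.refl (ZMod s))

/-- `μ^k ν² : (i,j) ↦ (i+k, j+2)`. -/
def muPowNuSq (r s k : ℕ) : Equiv.Perm (ZMod r × ZMod s) :=
  (Equiv.addRight ((k : ZMod r))).prodCongr (Equiv.addRight (2 : ZMod s))

/-- `G(r,s) = ⟨μ, ν, σ⟩`. -/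
def Ggroup (r s : ℕ) : Subgroup (Equiv.Perm (ZMod r × ZMod s)) :=
  Subgroup.closure {mu r s, nu r s, sigma r s}

/-- `H(r,s) = ⟨μ, σν, τ⟩`. -/
def Hgroup (r s : ℕ) : Subgroup (Equiv.Perm (ZMod r × ZMod s)) :=
  Subgroup.closure {mu r s, sigmaNu r s, tau r s}

/-! ### The graphs `Γ⁺(r,s)` (for `r`, `s` even) -/

/-- `X⁺`: the set of `(i,j)` with `i` and `j` of the same parity. -/
def XPlus (r s : ℕ) : Set (ZMod r × ZMod s) := {x | x.1.val % 2 = x.2.val % 2}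

/-- `Γ⁺(r,s)`, the subgraph of `Γ(r,s)` induced on `X⁺`. -/
def GammaPlus (r s : ℕ) : SimpleGraph (XPlus r s) :=
  SimpleGraph.induce (XPlus r s) (Gamma r s)

section parity

lemma val_add_one_mod_two (r : ℕ) (hr : 2 ∣ r) (hr0 : r ≠ 0) (i : ZMod r) :
    (i + 1).val % 2 = (i.val + 1) % 2 := by
  haveI : NeZero r := ⟨hr0⟩
  haveI : Fact (1 < r) := ⟨by have := Nat.le_of_dvd (Nat.pos_of_ne_zero hr0) hr; omega⟩
  rw [ZMod.val_add, Nat.mod_mod_of_dvd _ hr, ZMod.val_one]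

lemma val_add_two_mod_two (r : ℕ) (hr : 2 ∣ r) (hr0 : r ≠ 0) (i : ZMod r) :
    (i + 2).val % 2 = i.val % 2 := by
  have h1 := val_add_one_mod_two r hr hr0 i
  have h2 := val_add_one_mod_two r hr hr0 (i + 1)
  rw [show i + 1 + 1 = i + 2 by ring] at h2
  omega

lemma val_neg_mod_two (r : ℕ) (hr : 2 ∣ r) (hr0 : r ≠ 0) (i : ZMod r) :
    (-i).val % 2 = i.val % 2 := by
  haveI : NeZero r := ⟨hr0⟩
  rcases eq_or_ne i 0 with h | h
  · simp [h]
  · have h1 : (-i).val = r - i.val := by rw [ZMod.neg_val]; simp [h]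
    have h2 : i.val < r := ZMod.val_lt i
    have h3 : i.val ≠ 0 := fun hh => h ((ZMod.val_eq_zero i).mp hh)
    obtain ⟨t, rfl⟩ := hr
    rw [h1]
    omega

end parity

section plusPerms

variable (r s : ℕ)

/-- The restriction of `μ²` to `X⁺`. -/
def muSqP (hr : 2 ∣ r) (hr0 : r ≠ 0) : Equiv.Perm (XPlus r s) :=
  (muSq r s).subtypePerm (by
    intro x
    have h := val_add_two_mod_two r hr hr0 x.1
    simp only [XPlus, Set.mem_setOf_eq, muSq, Equiv.prodCongr_apply, Prod.map,
      Equiv.coe_addRight, Equiv.refl_apply]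
    omega)

/-- The restriction of `ν²` to `X⁺`. -/
def nuSqP (hs : 2 ∣ s) (hs0 : s ≠ 0) : Equiv.Perm (XPlus r s) :=
  (nuSq r s).subtypePerm (by
    intro x
    have h := val_add_two_mod_two s hs hs0 x.2
    simp only [XPlus, Set.mem_setOf_eq, nuSq, Equiv.prodCongr_apply, Prod.map,
      Equiv.coe_addRight, Equiv.refl_apply]
    omega)

/-- The restriction of `μν` to `X⁺`. -/
def muNuP (hr : 2 ∣ r) (hr0 : r ≠ 0) (hs : 2 ∣ s) (hs0 : s ≠ 0) : Equiv.Perm (XPlus r s) :=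
  (muNu r s).subtypePerm (by
    intro x
    have h1 := val_add_one_mod_two r hr hr0 x.1
    have h2 := val_add_one_mod_two s hs hs0 x.2
    simp only [XPlus, Set.mem_setOf_eq, muNu, Equiv.prodCongr_apply, Prod.map,
      Equiv.coe_addRight]
    omega)

/-- The restriction of `σ` to `X⁺`. -/
def sigmaP (hr : 2 ∣ r) (hr0 : r ≠ 0) : Equiv.Perm (XPlus r s) :=
  (sigma r s).subtypePerm (by
    intro x
    have h := val_neg_mod_two r hr hr0 x.1
    simp only [XPlus, Set.mem_setOf_eq, sigma, Equiv.prodCongr_apply, Prod.map,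
      Equiv.neg_apply, Equiv.refl_apply]
    omega)

/-- The restriction of `τ` to `X⁺`. -/
def tauP (hr : 2 ∣ r) (hr0 : r ≠ 0) (hs : 2 ∣ s) (hs0 : s ≠ 0) : Equiv.Perm (XPlus r s) :=
  (tau r s).subtypePerm (by
    intro x
    have h1 := val_neg_mod_two r hr hr0 x.1
    have h2 := val_neg_mod_two s hs hs0 x.2
    simp only [XPlus, Set.mem_setOf_eq, tau, Equiv.prodCongr_apply, Prod.map,
      Equiv.neg_apply]
    omega)

/-- The restriction of `σμν` to `X⁺`. -/
def sigmaMuNuP (hr : 2 ∣ r) (hr0 : r ≠ 0) (hs : 2 ∣ s) (hs0 : s ≠ 0) :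
    Equiv.Perm (XPlus r s) :=
  (sigmaMuNu r s).subtypePerm (by
    intro x
    have h1 := val_neg_mod_two r hr hr0 (x.1 + 1)
    have h2 := val_add_one_mod_two r hr hr0 x.1
    have h3 := val_add_one_mod_two s hs hs0 x.2
    simp only [XPlus, Set.mem_setOf_eq, sigmaMuNu, Equiv.prodCongr_apply, Prod.map,
      Equiv.trans_apply, Equiv.coe_addRight, Equiv.neg_apply]
    omega)

/-- `G⁺(r,s) = ⟨μ², μν, σ⟩` acting on `X⁺`. -/
def GPlusGroup (hr : 2 ∣ r) (hr0 : r ≠ 0) (hs : 2 ∣ s) (hs0 : s ≠ 0) :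
    Subgroup (Equiv.Perm (XPlus r s)) :=
  Subgroup.closure {muSqP r s hr hr0, muNuP r s hr hr0 hs hs0, sigmaP r s hr hr0}

/-- `H⁺(r,s) = ⟨μ², σμν, τ⟩` acting on `X⁺`. -/
def HPlusGroup (hr : 2 ∣ r) (hr0 : r ≠ 0) (hs : 2 ∣ s) (hs0 : s ≠ 0) :
    Subgroup (Equiv.Perm (XPlus r s)) :=
  Subgroup.closure
    {muSqP r s hr hr0, sigmaMuNuP r s hr hr0 hs hs0, tauP r s hr hr0 hs hs0}

end plusPerms

/-! ### The standard double cover `Γ₂(r,s)` -/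

/-- Adjacency of the double cover: `(i,j)_δ ~ (i ± 1, j ± 1)_{δ+1}`. -/
def gamma2Rel (r s : ℕ) (x y : (ZMod r × ZMod s) × ZMod 2) : Prop :=
  (y.1.1 = x.1.1 + 1 ∨ y.1.1 = x.1.1 - 1) ∧ (y.1.2 = x.1.2 + 1 ∨ y.1.2 = x.1.2 - 1) ∧
    y.2 = x.2 + 1

/-- `Γ₂(r,s)`, the standard double cover of `Γ(r,s)`. -/
def Gamma2 (r s : ℕ) : SimpleGraph ((ZMod r × ZMod s) × ZMod 2) :=
  SimpleGraph.fromRel (gamma2Rel r s)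

/-- `μ : (i,j)_δ ↦ (i+1, j)_δ` on the double cover. -/
def muD (r s : ℕ) : Equiv.Perm ((ZMod r × ZMod s) × ZMod 2) :=
  (mu r s).prodCongr (Equiv.refl (ZMod 2))

/-- `ν : (i,j)_δ ↦ (i, j+1)_δ` on the double cover. -/
def nuD (r s : ℕ) : Equiv.Perm ((ZMod r × ZMod s) × ZMod 2) :=
  (nu r s).prodCongr (Equiv.refl (ZMod 2))

/-- `σ : (i,j)_δ ↦ (i, -j)_{δ+1}` on the double cover. -/
def sigmaD (r s : ℕ) : Equiv.Perm ((ZMod r × ZMod s) × ZMod 2) :=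
  ((Equiv.refl (ZMod r)).prodCongr (Equiv.neg (ZMod s))).prodCongr
    (Equiv.addRight (1 : ZMod 2))

/-- `τ : (i,j)_δ ↦ (-i, -j)_δ` on the double cover. -/
def tauD (r s : ℕ) : Equiv.Perm ((ZMod r × ZMod s) × ZMod 2) :=
  (tau r s).prodCongr (Equiv.refl (ZMod 2))

/-- `G₂(r,s) = ⟨μ, ν, σ, τ⟩` on the double cover. -/
def G2group (r s : ℕ) : Subgroup (Equiv.Perm ((ZMod r × ZMod s) × ZMod 2)) :=
  Subgroup.closure {muD r s, nuD r s, sigmaD r s, tauD r s}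



/-! ### Auxiliary lemmas for stmt0 -/

section stmt0aux

lemma mu_apply' (r s : ℕ) (x : ZMod r × ZMod s) : mu r s x = (x.1 + 1, x.2) := rfl
lemma nu_apply' (r s : ℕ) (x : ZMod r × ZMod s) : nu r s x = (x.1, x.2 + 1) := rfl
lemma sigma_apply' (r s : ℕ) (x : ZMod r × ZMod s) : sigma r s x = (-x.1, x.2) := rfl

lemma mu_pow_apply' (r s k : ℕ) (x : ZMod r × ZMod s) :
    ((mu r s) ^ k) x = (x.1 + (k : ZMod r), x.2) := by
  induction k with
  | zero => simp
  | succ n ih =>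
    rw [pow_succ', Equiv.Perm.mul_apply, ih, mu_apply']
    push_cast
    simp [add_assoc]

lemma nu_pow_apply' (r s k : ℕ) (x : ZMod r × ZMod s) :
    ((nu r s) ^ k) x = (x.1, x.2 + (k : ZMod s)) := by
  induction k with
  | zero => simp
  | succ n ih =>
    rw [pow_succ', Equiv.Perm.mul_apply, ih, nu_apply']
    push_cast
    simp [add_assoc]

lemma nu_mu_comm (r s : ℕ) : nu r s * mu r s = mu r s * nu r s := Equiv.ext fun _ => rfl

lemma sigma_nu_comm (r s : ℕ) : sigma r s * nu r s = nu r s * sigma r s := Equiv.ext fun _ => rfl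

lemma sigma_sigma (r s : ℕ) : sigma r s * sigma r s = 1 := by
  apply Equiv.ext; intro x; simp [sigma_apply', Equiv.Perm.mul_apply]

lemma sigma_inv (r s : ℕ) : (sigma r s)⁻¹ = sigma r s :=
  inv_eq_of_mul_eq_one_right (sigma_sigma r s)

lemma mu_sigma_mu_sigma (r s : ℕ) : mu r s * sigma r s * mu r s * sigma r s = 1 := by
  apply Equiv.ext; intro x
  simp only [Equiv.Perm.mul_apply, mu_apply', sigma_apply', Equiv.Perm.one_apply]
  ext <;> simp

lemma sigma_mu_sigma (r s : ℕ) : sigma r s * mu r s * (sigma r s)⁻¹ = (mu r s)⁻¹ := by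
  rw [sigma_inv]
  have h := mu_sigma_mu_sigma r s
  have h2 : sigma r s * mu r s * sigma r s
      = (mu r s)⁻¹ * (mu r s * sigma r s * mu r s * sigma r s) := by group
  rw [h2, h, mul_one]

/-- Generic criterion for `closure {g}` to be normal in `closure S`. -/
lemma normalIn_closure_aux {G : Type*} [Group G] (S : Set G) (g : G)
    (hmem : g ∈ Subgroup.closure S)
    (hconj : ∀ a ∈ S, a * g * a⁻¹ ∈ Subgroup.closure {g} ∧
      a⁻¹ * g * a ∈ Subgroup.closure {g}) :
    NormalIn (Subgroup.closure {g}) (Subgroup.closure S) := by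
  constructor
  · rw [Subgroup.closure_le]
    intro x hx
    rw [Set.mem_singleton_iff] at hx
    subst hx
    exact hmem
  · intro h hh
    have main : ∀ n ∈ Subgroup.closure {g}, h * n * h⁻¹ ∈ Subgroup.closure {g} ∧
        h⁻¹ * n * h ∈ Subgroup.closure {g} := by
      refine Subgroup.closure_induction
        (p := fun h _ => ∀ n ∈ Subgroup.closure {g}, h * n * h⁻¹ ∈ Subgroup.closure {g} ∧
          h⁻¹ * n * h ∈ Subgroup.closure {g}) ?_ ?_ ?_ ?_ hh
      · intro a ha n hn
        obtain ⟨t, rfl⟩ := Subgroup.mem_closure_singleton.mp hn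
        constructor
        · rw [← conj_zpow]
          exact zpow_mem (hconj a ha).1 t
        · have : a⁻¹ * g ^ t * a = a⁻¹ * g ^ t * a⁻¹⁻¹ := by rw [inv_inv]
          rw [this, ← conj_zpow]
          have := (hconj a ha).2
          rw [show a⁻¹ * g * a = a⁻¹ * g * a⁻¹⁻¹ by rw [inv_inv]] at this
          exact zpow_mem this t
      · intro n hn
        simpa using hn
      · intro x y hx hy px py n hn
        constructor
        · have h1 : x * y * n * (x * y)⁻¹ = x * (y * n * y⁻¹) * x⁻¹ := by group
          rw [h1]
          exact (px _ ((py n hn).1)).1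
        · have h1 : (x * y)⁻¹ * n * (x * y) = y⁻¹ * (x⁻¹ * n * x) * y := by group
          rw [h1]
          exact (py _ ((px n hn).2)).2
      · intro x hx px n hn
        constructor
        · rw [inv_inv]
          exact (px n hn).2
        · rw [inv_inv]
          exact (px n hn).1
    intro n hn
    exact (main n hn).1

lemma mem_closure_mu_pow (r s d : ℕ) (n : Equiv.Perm (ZMod r × ZMod s))
    (hn : n ∈ Subgroup.closure {(mu r s) ^ d}) :
    ∀ x : ZMod r × ZMod s, (n x).2 = x.2 ∧ ∃ t : ZMod r, (n x).1 = x.1 + t * (d : ZMod r) := by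
  refine Subgroup.closure_induction
    (p := fun n _ => ∀ x : ZMod r × ZMod s,
      (n x).2 = x.2 ∧ ∃ t : ZMod r, (n x).1 = x.1 + t * (d : ZMod r)) ?_ ?_ ?_ ?_ hn
  · intro a ha x
    rw [Set.mem_singleton_iff] at ha
    subst ha
    rw [mu_pow_apply']
    exact ⟨rfl, 1, by ring⟩
  · intro x
    exact ⟨rfl, 0, by simp⟩
  · intro a b _ _ pa pb x
    obtain ⟨hb2, tb, hb1⟩ := pb x
    obtain ⟨ha2, ta, ha1⟩ := pa (b x)
    refine ⟨?_, ta + tb, ?_⟩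
    · rw [Equiv.Perm.mul_apply, ha2, hb2]
    · rw [Equiv.Perm.mul_apply, ha1, hb1]; ring
  · intro a _ pa x
    obtain ⟨h2, t, h1⟩ := pa (a⁻¹ x)
    rw [show a (a⁻¹ x) = x by simp] at h2 h1
    exact ⟨h2.symm, -t, by linear_combination -h1⟩

lemma mem_closure_nu_pow (r s d : ℕ) (n : Equiv.Perm (ZMod r × ZMod s))
    (hn : n ∈ Subgroup.closure {(nu r s) ^ d}) :
    ∀ x : ZMod r × ZMod s, (n x).1 = x.1 ∧ ∃ t : ZMod s, (n x).2 = x.2 + t * (d : ZMod s) := by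
  refine Subgroup.closure_induction
    (p := fun n _ => ∀ x : ZMod r × ZMod s,
      (n x).1 = x.1 ∧ ∃ t : ZMod s, (n x).2 = x.2 + t * (d : ZMod s)) ?_ ?_ ?_ ?_ hn
  · intro a ha x
    rw [Set.mem_singleton_iff] at ha
    subst ha
    rw [nu_pow_apply']
    exact ⟨rfl, 1, by ring⟩
  · intro x
    exact ⟨rfl, 0, by simp⟩
  · intro a b _ _ pa pb x
    obtain ⟨hb2, tb, hb1⟩ := pb x
    obtain ⟨ha2, ta, ha1⟩ := pa (b x)
    refine ⟨?_, ta + tb, ?_⟩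
    · rw [Equiv.Perm.mul_apply, ha2, hb2]
    · rw [Equiv.Perm.mul_apply, ha1, hb1]; ring
  · intro a _ pa x
    obtain ⟨h2, t, h1⟩ := pa (a⁻¹ x)
    rw [show a (a⁻¹ x) = x by simp] at h2 h1
    exact ⟨h2.symm, -t, by linear_combination -h1⟩

lemma no_mult_of_two (m d : ℕ) (hdvd : d ∣ m) (h3 : 3 ≤ d) :
    ∀ t : ZMod m, (2 : ZMod m) ≠ t * (d : ZMod m) := by
  intro t h
  have hmap := congrArg (ZMod.castHom hdvd (ZMod d)) h
  rw [map_mul, map_natCast, ZMod.natCast_self, mul_zero, map_ofNat] at hmap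
  have : ((2 : ℕ) : ZMod d) = 0 := by push_cast; exact hmap
  rw [ZMod.natCast_eq_zero_iff] at this
  have := Nat.le_of_dvd (by norm_num) this
  omega

lemma cast_ne_zmod (m a : ℕ) (ha : 0 < a) (ham : a < m) : ((a : ℕ) : ZMod m) ≠ 0 := by
  intro h
  rw [ZMod.natCast_eq_zero_iff] at h
  have := Nat.le_of_dvd ha h
  omega

lemma one_ne_zero_zmod (m : ℕ) (hm : 3 ≤ m) : (1 : ZMod m) ≠ 0 := by
  have := cast_ne_zmod m 1 (by omega) (by omega)
  simpa using this

lemma two_ne_zero_zmod (m : ℕ) (hm : 3 ≤ m) : (2 : ZMod m) ≠ 0 := by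
  have := cast_ne_zmod m 2 (by omega) (by omega)
  simpa using this

end stmt0aux

section stmt0core

lemma conj_mem_of_commute {G : Type*} [Group G] {a g : G} (c : Commute a g)
    {N : Subgroup G} (hgN : g ∈ N) : a * g * a⁻¹ ∈ N ∧ a⁻¹ * g * a ∈ N := by
  constructor
  · rw [c.eq, mul_inv_cancel_right]; exact hgN
  · rw [c.inv_left.eq, inv_mul_cancel_right]; exact hgN

lemma core_r (r s d : ℕ) (hr : 3 ≤ r) (hs : 3 ≤ s) (hdvd : d ∣ r) (h3 : 3 ≤ d)
    (hdr : d < r) (hbasic : IsBasic (Gamma r s) (Ggroup r s)) : False := by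
  haveI : NeZero r := ⟨by omega⟩
  haveI : NeZero s := ⟨by omega⟩
  set g : Equiv.Perm (ZMod r × ZMod s) := (mu r s) ^ d with hg
  set N : Subgroup (Equiv.Perm (ZMod r × ZMod s)) := Subgroup.closure {g} with hNdef
  have hgN : g ∈ N := Subgroup.subset_closure rfl
  have h1s : (1 : ZMod s) ≠ 0 := one_ne_zero_zmod s hs
  have h2s : (2 : ZMod s) ≠ 0 := two_ne_zero_zmod s hs
  have hkey : ∀ t : ZMod r, (2 : ZMod r) ≠ t * (d : ZMod r) := no_mult_of_two r d hdvd h3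
  -- normality
  have hnorm : NormalIn N (Ggroup r s) := by
    refine normalIn_closure_aux _ _ (pow_mem (Subgroup.subset_closure (by simp)) d) ?_
    intro a ha
    simp only [Set.mem_insert_iff, Set.mem_singleton_iff] at ha
    rcases ha with rfl | rfl | rfl
    · exact conj_mem_of_commute ((Commute.refl (mu r s)).pow_right d) hgN
    · have c : Commute (nu r s) g := by
        rw [hg]; exact Commute.pow_right (nu_mu_comm r s) d
      exact conj_mem_of_commute c hgN
    · have hs1 : sigma r s * g * (sigma r s)⁻¹ = g⁻¹ := by
        rw [hg, ← conj_pow, sigma_mu_sigma, inv_pow]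
      constructor
      · rw [hs1]; exact inv_mem hgN
      · rw [sigma_inv] at hs1 ⊢
        rw [hs1]; exact inv_mem hgN
  -- nontriviality
  have hne : N ≠ ⊥ := by
    intro hbot
    have h1 : g = 1 := by rw [← Subgroup.mem_bot, ← hbot]; exact hgN
    have e1 := mu_pow_apply' r s d ((0 : ZMod r), (0 : ZMod s))
    rw [← hg, h1] at e1
    exact cast_ne_zmod r d (by omega) hdr
      (by simpa using (congrArg Prod.fst e1).symm)
  -- orbit characterization
  have hclass : ∀ x y : ZMod r × ZMod s,
      Quotient.mk (orbitSetoid N) x = Quotient.mk (orbitSetoid N) y →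
      x.2 = y.2 ∧ ∃ t : ZMod r, x.1 = y.1 + t * (d : ZMod r) := by
    intro x y h
    have h2 : (MulAction.orbitRel N (ZMod r × ZMod s)).r x y := Quotient.exact h
    rw [MulAction.orbitRel_apply] at h2
    obtain ⟨⟨n, hn⟩, hx⟩ := h2
    have hx' : n y = x := hx
    have hi := mem_closure_mu_pow r s d n hn y
    rw [hx'] at hi
    exact hi
  rcases hbasic N hnorm hne with hcard | hcyc
  · -- card ≤ 2 : impossible, exhibit 3 classes
    have finj : Function.Injective
        (fun k : Fin 3 => Quotient.mk (orbitSetoid N) ((0 : ZMod r), ((k : ℕ) : ZMod s))) := by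
      intro a b hab
      have h2 := (hclass _ _ hab).1
      simp only at h2
      have h4 := congrArg ZMod.val h2
      rw [ZMod.val_cast_of_lt (lt_of_lt_of_le a.isLt hs),
        ZMod.val_cast_of_lt (lt_of_lt_of_le b.isLt hs)] at h4
      exact Fin.ext h4
    have h3le : 3 ≤ Nat.card (Quotient (orbitSetoid N)) := by
      have := Nat.card_le_card_of_injective _ finj
      simpa using this
    omega
  · -- cycle : impossible, exhibit a vertex with 3 distinct neighbours
    obtain ⟨m, hm3, ⟨e⟩⟩ := hcyc
    obtain ⟨k, rfl⟩ : ∃ k, m = k + 2 := ⟨m - 2, by omega⟩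
    set Q := Quotient (orbitSetoid N)
    let mk : ZMod r × ZMod s → Q := Quotient.mk (orbitSetoid N)
    set c0 : Q := mk ((0 : ZMod r), (0 : ZMod s)) with hc0
    set c1 : Q := mk ((1 : ZMod r), (1 : ZMod s)) with hc1
    set c2 : Q := mk ((1 : ZMod r), (-1 : ZMod s)) with hc2
    set c3 : Q := mk ((-1 : ZMod r), (1 : ZMod s)) with hc3
    have n01 : c0 ≠ c1 := fun h => h1s ((hclass _ _ h).1).symm
    have n02 : c0 ≠ c2 := fun h => h1s (by linear_combination (hclass _ _ h).1)
    have n03 : c0 ≠ c3 := fun h => h1s ((hclass _ _ h).1).symm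
    have n12 : c1 ≠ c2 := fun h => h2s (by linear_combination (hclass _ _ h).1)
    have n23 : c2 ≠ c3 := fun h => h2s (by linear_combination -(hclass _ _ h).1)
    have n13 : c1 ≠ c3 := by
      intro h
      obtain ⟨t, ht⟩ := (hclass _ _ h).2
      exact hkey t (by linear_combination ht)
    -- adjacency in the quotient
    have gadj : ∀ x y : ZMod r × ZMod s, x ≠ y → gammaRel r s x y → (Gamma r s).Adj x y := by
      intro x y hne' hrel
      rw [Gamma, SimpleGraph.fromRel_adj]
      exact ⟨hne', Or.inl hrel⟩
    have qadj : ∀ x y : ZMod r × ZMod s, mk x ≠ mk y → (Gamma r s).Adj x y →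
        (quotientGraph (Gamma r s) N).Adj (mk x) (mk y) := by
      intro x y hne' hadj
      rw [quotientGraph, SimpleGraph.fromRel_adj]
      exact ⟨hne', Or.inl ⟨x, y, rfl, rfl, hadj⟩⟩
    have a01 : (quotientGraph (Gamma r s) N).Adj c0 c1 := by
      refine qadj _ _ n01 (gadj _ _ (fun h => h1s (congrArg Prod.snd h).symm) ?_)
      exact ⟨Or.inl (by ring), Or.inl (by ring)⟩
    have a02 : (quotientGraph (Gamma r s) N).Adj c0 c2 := by
      refine qadj _ _ n02 (gadj _ _ (fun h => h1s (by
        have := congrArg Prod.snd h; simp only at this; linear_combination this)) ?_)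
      exact ⟨Or.inl (by ring), Or.inr (by ring)⟩
    have a03 : (quotientGraph (Gamma r s) N).Adj c0 c3 := by
      refine qadj _ _ n03 (gadj _ _ (fun h => h1s (congrArg Prod.snd h).symm) ?_)
      exact ⟨Or.inr (by ring), Or.inl (by ring)⟩
    -- push through the isomorphism
    have e1 : (SimpleGraph.cycleGraph (k + 2)).Adj (e c0) (e c1) := e.map_adj_iff.mpr a01
    have e2 : (SimpleGraph.cycleGraph (k + 2)).Adj (e c0) (e c2) := e.map_adj_iff.mpr a02
    have e3 : (SimpleGraph.cycleGraph (k + 2)).Adj (e c0) (e c3) := e.map_adj_iff.mpr a03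
    have m1 : e c1 ∈ ({e c0 - 1, e c0 + 1} : Set (Fin (k + 2))) := by
      rw [← SimpleGraph.cycleGraph_neighborSet]; exact e1
    have m2 : e c2 ∈ ({e c0 - 1, e c0 + 1} : Set (Fin (k + 2))) := by
      rw [← SimpleGraph.cycleGraph_neighborSet]; exact e2
    have m3 : e c3 ∈ ({e c0 - 1, e c0 + 1} : Set (Fin (k + 2))) := by
      rw [← SimpleGraph.cycleGraph_neighborSet]; exact e3
    have einj : Function.Injective e := e.toEquiv.injective
    have i12 : e c1 ≠ e c2 := fun h => n12 (einj h)
    have i13 : e c1 ≠ e c3 := fun h => n13 (einj h)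
    have i23 : e c2 ≠ e c3 := fun h => n23 (einj h)
    simp only [Set.mem_insert_iff, Set.mem_singleton_iff] at m1 m2 m3
    rcases m1 with h1 | h1 <;> rcases m2 with h2 | h2 <;> rcases m3 with h3 | h3 <;>
      first
        | exact i12 (h1.trans h2.symm)
        | exact i13 (h1.trans h3.symm)
        | exact i23 (h2.trans h3.symm)

lemma core_s (r s d : ℕ) (hr : 3 ≤ r) (hs : 3 ≤ s) (hdvd : d ∣ s) (h3 : 3 ≤ d)
    (hds : d < s) (hbasic : IsBasic (Gamma r s) (Ggroup r s)) : False := by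
  haveI : NeZero r := ⟨by omega⟩
  haveI : NeZero s := ⟨by omega⟩
  set g : Equiv.Perm (ZMod r × ZMod s) := (nu r s) ^ d with hg
  set N : Subgroup (Equiv.Perm (ZMod r × ZMod s)) := Subgroup.closure {g} with hNdef
  have hgN : g ∈ N := Subgroup.subset_closure rfl
  have h1r : (1 : ZMod r) ≠ 0 := one_ne_zero_zmod r hr
  have h2r : (2 : ZMod r) ≠ 0 := two_ne_zero_zmod r hr
  have hkey : ∀ t : ZMod s, (2 : ZMod s) ≠ t * (d : ZMod s) := no_mult_of_two s d hdvd h3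
  -- normality
  have hnorm : NormalIn N (Ggroup r s) := by
    refine normalIn_closure_aux _ _ (pow_mem (Subgroup.subset_closure (by simp)) d) ?_
    intro a ha
    simp only [Set.mem_insert_iff, Set.mem_singleton_iff] at ha
    rcases ha with rfl | rfl | rfl
    · have c : Commute (mu r s) g := by
        rw [hg]; exact Commute.pow_right (nu_mu_comm r s).symm d
      exact conj_mem_of_commute c hgN
    · exact conj_mem_of_commute ((Commute.refl (nu r s)).pow_right d) hgN
    · have c : Commute (sigma r s) g := by
        rw [hg]; exact Commute.pow_right (sigma_nu_comm r s) d
      exact conj_mem_of_commute c hgN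
  -- nontriviality
  have hne : N ≠ ⊥ := by
    intro hbot
    have h1 : g = 1 := by rw [← Subgroup.mem_bot, ← hbot]; exact hgN
    have e1 := nu_pow_apply' r s d ((0 : ZMod r), (0 : ZMod s))
    rw [← hg, h1] at e1
    exact cast_ne_zmod s d (by omega) hds
      (by simpa using (congrArg Prod.snd e1).symm)
  -- orbit characterization
  have hclass : ∀ x y : ZMod r × ZMod s,
      Quotient.mk (orbitSetoid N) x = Quotient.mk (orbitSetoid N) y →
      x.1 = y.1 ∧ ∃ t : ZMod s, x.2 = y.2 + t * (d : ZMod s) := by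
    intro x y h
    have h2 : (MulAction.orbitRel N (ZMod r × ZMod s)).r x y := Quotient.exact h
    rw [MulAction.orbitRel_apply] at h2
    obtain ⟨⟨n, hn⟩, hx⟩ := h2
    have hx' : n y = x := hx
    have hi := mem_closure_nu_pow r s d n hn y
    rw [hx'] at hi
    exact hi
  rcases hbasic N hnorm hne with hcard | hcyc
  · -- card ≤ 2 : impossible, exhibit 3 classes
    have finj : Function.Injective
        (fun k : Fin 3 => Quotient.mk (orbitSetoid N) (((k : ℕ) : ZMod r), (0 : ZMod s))) := by
      intro a b hab
      have h2 := (hclass _ _ hab).1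
      simp only at h2
      have h4 := congrArg ZMod.val h2
      rw [ZMod.val_cast_of_lt (lt_of_lt_of_le a.isLt hr),
        ZMod.val_cast_of_lt (lt_of_lt_of_le b.isLt hr)] at h4
      exact Fin.ext h4
    have h3le : 3 ≤ Nat.card (Quotient (orbitSetoid N)) := by
      have := Nat.card_le_card_of_injective _ finj
      simpa using this
    omega
  · -- cycle : impossible, exhibit a vertex with 3 distinct neighbours
    obtain ⟨m, hm3, ⟨e⟩⟩ := hcyc
    obtain ⟨k, rfl⟩ : ∃ k, m = k + 2 := ⟨m - 2, by omega⟩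
    set Q := Quotient (orbitSetoid N)
    let mk : ZMod r × ZMod s → Q := Quotient.mk (orbitSetoid N)
    set c0 : Q := mk ((0 : ZMod r), (0 : ZMod s)) with hc0
    set c1 : Q := mk ((1 : ZMod r), (1 : ZMod s)) with hc1
    set c2 : Q := mk ((-1 : ZMod r), (1 : ZMod s)) with hc2
    set c3 : Q := mk ((1 : ZMod r), (-1 : ZMod s)) with hc3
    have n01 : c0 ≠ c1 := fun h => h1r ((hclass _ _ h).1).symm
    have n02 : c0 ≠ c2 := fun h => h1r (by linear_combination (hclass _ _ h).1)
    have n03 : c0 ≠ c3 := fun h => h1r ((hclass _ _ h).1).symm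
    have n12 : c1 ≠ c2 := fun h => h2r (by linear_combination (hclass _ _ h).1)
    have n23 : c2 ≠ c3 := fun h => h2r (by linear_combination -(hclass _ _ h).1)
    have n13 : c1 ≠ c3 := by
      intro h
      obtain ⟨t, ht⟩ := (hclass _ _ h).2
      exact hkey t (by linear_combination ht)
    have gadj : ∀ x y : ZMod r × ZMod s, x ≠ y → gammaRel r s x y → (Gamma r s).Adj x y := by
      intro x y hne' hrel
      rw [Gamma, SimpleGraph.fromRel_adj]
      exact ⟨hne', Or.inl hrel⟩
    have qadj : ∀ x y : ZMod r × ZMod s, mk x ≠ mk y → (Gamma r s).Adj x y →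
        (quotientGraph (Gamma r s) N).Adj (mk x) (mk y) := by
      intro x y hne' hadj
      rw [quotientGraph, SimpleGraph.fromRel_adj]
      exact ⟨hne', Or.inl ⟨x, y, rfl, rfl, hadj⟩⟩
    have a01 : (quotientGraph (Gamma r s) N).Adj c0 c1 := by
      refine qadj _ _ n01 (gadj _ _ (fun h => h1r (congrArg Prod.fst h).symm) ?_)
      exact ⟨Or.inl (by ring), Or.inl (by ring)⟩
    have a02 : (quotientGraph (Gamma r s) N).Adj c0 c2 := by
      refine qadj _ _ n02 (gadj _ _ (fun h => h1r (by
        have := congrArg Prod.fst h; simp only at this; linear_combination this)) ?_)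
      exact ⟨Or.inr (by ring), Or.inl (by ring)⟩
    have a03 : (quotientGraph (Gamma r s) N).Adj c0 c3 := by
      refine qadj _ _ n03 (gadj _ _ (fun h => h1r (congrArg Prod.fst h).symm) ?_)
      exact ⟨Or.inl (by ring), Or.inr (by ring)⟩
    have e1 : (SimpleGraph.cycleGraph (k + 2)).Adj (e c0) (e c1) := e.map_adj_iff.mpr a01
    have e2 : (SimpleGraph.cycleGraph (k + 2)).Adj (e c0) (e c2) := e.map_adj_iff.mpr a02
    have e3 : (SimpleGraph.cycleGraph (k + 2)).Adj (e c0) (e c3) := e.map_adj_iff.mpr a03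
    have m1 : e c1 ∈ ({e c0 - 1, e c0 + 1} : Set (Fin (k + 2))) := by
      rw [← SimpleGraph.cycleGraph_neighborSet]; exact e1
    have m2 : e c2 ∈ ({e c0 - 1, e c0 + 1} : Set (Fin (k + 2))) := by
      rw [← SimpleGraph.cycleGraph_neighborSet]; exact e2
    have m3 : e c3 ∈ ({e c0 - 1, e c0 + 1} : Set (Fin (k + 2))) := by
      rw [← SimpleGraph.cycleGraph_neighborSet]; exact e3
    have einj : Function.Injective e := e.toEquiv.injective
    have i12 : e c1 ≠ e c2 := fun h => n12 (einj h)
    have i13 : e c1 ≠ e c3 := fun h => n13 (einj h)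
    have i23 : e c2 ≠ e c3 := fun h => n23 (einj h)
    simp only [Set.mem_insert_iff, Set.mem_singleton_iff] at m1 m2 m3
    rcases m1 with h1 | h1 <;> rcases m2 with h2 | h2 <;> rcases m3 with h3 | h3 <;>
      first
        | exact i12 (h1.trans h2.symm)
        | exact i13 (h1.trans h3.symm)
        | exact i23 (h2.trans h3.symm)

lemma prime_or_four (r : ℕ) (hr : 3 ≤ r)
    (h : ∀ d, d ∣ r → 3 ≤ d → d < r → False) : r = 4 ∨ r.Prime := by
  by_contra hcon
  push_neg at hcon
  obtain ⟨h4, hnp⟩ := hcon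
  have h1 : r ≠ 1 := by omega
  have hp := Nat.minFac_prime h1
  have hdvd := Nat.minFac_dvd r
  set p := r.minFac with hpdef
  have hp2 : 2 ≤ p := hp.two_le
  set q := r / p with hqdef
  have hqd : q ∣ r := Nat.div_dvd_of_dvd hdvd
  have hqr : r = p * q := (Nat.mul_div_cancel' hdvd).symm
  clear_value q p
  have hq1 : q ≠ 1 := by
    intro h1'
    rw [h1', mul_one] at hqr
    exact hnp (hqr ▸ hp)
  have hq0 : q ≠ 0 := by intro h0; rw [h0, mul_zero] at hqr; omega
  have hq2 : q ≠ 2 := by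
    intro h2'
    have h2d : 2 ∣ r := by rw [hqr, h2']; exact ⟨p, by ring⟩
    have := Nat.minFac_le_of_dvd (le_refl 2) h2d
    have hp2' : p = 2 := by omega
    rw [hp2', h2'] at hqr
    omega
  have hq3 : 3 ≤ q := by omega
  have hqle : q ≤ r := Nat.le_of_dvd (by omega) hqd
  have hqne : q ≠ r := by
    intro hqr'
    rw [hqr'] at hqr
    nlinarith
  exact h q hqd hq3 (lt_of_le_of_ne hqle hqne)

end stmt0core

/-- if `(Γ(r,s), G(r,s))` (with `r,s ≥ 3`, at least one odd) is basic of cycle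
type, then `(r,s)` is `(4,p)`, `(p,4)` or `(p,q)` for odd primes `p`, `q`. -/
theorem stmt0 (r s : ℕ) (hr : 3 ≤ r) (hs : 3 ≤ s) (hodd : Odd r ∨ Odd s)
    (hbasic : BasicOfCycleType (Gamma r s) (Ggroup r s)) :
    (∃ p : ℕ, p.Prime ∧ Odd p ∧ r = 4 ∧ s = p) ∨
      (∃ p : ℕ, p.Prime ∧ Odd p ∧ r = p ∧ s = 4) ∨
      (∃ p q : ℕ, p.Prime ∧ Odd p ∧ q.Prime ∧ Odd q ∧ r = p ∧ s = q) := by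
  obtain ⟨hbas, -⟩ := hbasic
  have hr4 : r = 4 ∨ r.Prime :=
    prime_or_four r hr (fun d hd h3 hlt => core_r r s d hr hs hd h3 hlt hbas)
  have hs4 : s = 4 ∨ s.Prime :=
    prime_or_four s hs (fun d hd h3 hlt => core_s r s d hr hs hd h3 hlt hbas)
  rcases hr4 with rfl | hrp
  · rcases hs4 with rfl | hsp
    · rcases hodd with h | h <;> rw [Nat.odd_iff] at h <;> omega
    · exact Or.inl ⟨s, hsp, hsp.odd_of_ne_two (by omega), rfl, rfl⟩
  · rcases hs4 with rfl | hsp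
    · exact Or.inr (Or.inl ⟨r, hrp, hrp.odd_of_ne_two (by omega), rfl, rfl⟩)
    · exact Or.inr (Or.inr ⟨r, s, hrp, hrp.odd_of_ne_two (by omega),
        hsp, hsp.odd_of_ne_two (by omega), rfl, rfl⟩)


end OG4
end

section
/- Let r, s ≥ 3 be integers, both even. If the pair (Γ⁺(r,s), H⁺(r,s)) is basic of cycle type, then (r,s) = (4,4), (4,2p), (2p,4), or (2p,2q) for some odd primes p and q. -/
open SimpleGraph

namespace OG4

variable {V : Type*} {W : Type*}

/-! ### Auxiliary lemmas for stmt3 -/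

section Stmt3Aux

lemma isoCycle_no_three {W : Type*} {Δ : SimpleGraph W} (hiso : IsoCycle Δ)
    {v a b c : W} (hab : a ≠ b) (hac : a ≠ c) (hbc : b ≠ c)
    (ha : Δ.Adj v a) (hb : Δ.Adj v b) (hc : Δ.Adj v c) : False := by
  obtain ⟨m, hm, ⟨e⟩⟩ := hiso
  obtain ⟨n, rfl⟩ : ∃ n, m = n + 2 := ⟨m - 2, by omega⟩
  have key : ∀ {x y : W}, Δ.Adj x y → e y = e x - 1 ∨ e y = e x + 1 := by
    intro x y hxy
    have h1 : (SimpleGraph.cycleGraph (n + 2)).Adj (e x) (e y) := e.map_adj_iff.mpr hxy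
    have h2 : e y ∈ (SimpleGraph.cycleGraph (n + 2)).neighborSet (e x) := h1
    rw [SimpleGraph.cycleGraph_neighborSet] at h2
    simpa using h2
  have hea := key ha
  have heb := key hb
  have hec := key hc
  have h1 : e a ≠ e b := fun h => hab (e.toEquiv.injective h)
  have h2 : e a ≠ e c := fun h => hac (e.toEquiv.injective h)
  have h3 : e b ≠ e c := fun h => hbc (e.toEquiv.injective h)
  rcases hea with h | h <;> rcases heb with h' | h' <;> rcases hec with h'' | h'' <;>
    simp_all

lemma normalIn_zpowers {G : Type*} [Group G] (S : Set G) (g : G)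
    (hg : g ∈ Subgroup.closure S)
    (hconj : ∀ t ∈ S, t * g = g * t ∨ g * (t * g) = t) :
    NormalIn (Subgroup.zpowers g) (Subgroup.closure S) := by
  have key : ∀ t : G, t * g * t⁻¹ ∈ Subgroup.zpowers g →
      ∀ n ∈ Subgroup.zpowers g, t * n * t⁻¹ ∈ Subgroup.zpowers g := by
    intro t ht n hn
    rw [Subgroup.mem_zpowers_iff] at hn
    obtain ⟨k, rfl⟩ := hn
    have h1 : t * g ^ k * t⁻¹ = (t * g * t⁻¹) ^ k := conj_zpow.symm
    rw [h1]
    exact Subgroup.zpow_mem _ ht k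
  constructor
  · exact Subgroup.zpowers_le.mpr hg
  · intro h hh
    have main : (∀ n ∈ Subgroup.zpowers g, h * n * h⁻¹ ∈ Subgroup.zpowers g) ∧
        (∀ n ∈ Subgroup.zpowers g, h⁻¹ * n * h ∈ Subgroup.zpowers g) := by
      induction hh using Subgroup.closure_induction with
      | mem t htS =>
        have hpair : t * g * t⁻¹ ∈ Subgroup.zpowers g ∧ t⁻¹ * g * t ∈ Subgroup.zpowers g := by
          rcases hconj t htS with hc | hc
          · constructor
            · have h1 : t * g * t⁻¹ = g := by rw [hc]; group
              rw [h1]; exact Subgroup.mem_zpowers g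
            · have h1 : t⁻¹ * g * t = g := by
                have h2 : g * t = t * g := hc.symm
                calc t⁻¹ * g * t = t⁻¹ * (g * t) := by group
                _ = t⁻¹ * (t * g) := by rw [h2]
                _ = g := by group
              rw [h1]; exact Subgroup.mem_zpowers g
          · constructor
            · have h1 : t * g * t⁻¹ = g⁻¹ := by
                have h2 : t * g = g⁻¹ * t := by
                  calc t * g = g⁻¹ * (g * (t * g)) := by group
                  _ = g⁻¹ * t := by rw [hc]
                rw [h2]; group
              rw [h1]; exact Subgroup.inv_mem _ (Subgroup.mem_zpowers g)
            · have h1 : t⁻¹ * g * t = g⁻¹ := by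
                have h2 : g * t = t * g⁻¹ := by
                  calc g * t = (g * (t * g)) * g⁻¹ := by group
                  _ = t * g⁻¹ := by rw [hc]
                calc t⁻¹ * g * t = t⁻¹ * (g * t) := by group
                _ = t⁻¹ * (t * g⁻¹) := by rw [h2]
                _ = g⁻¹ := by group
              rw [h1]; exact Subgroup.inv_mem _ (Subgroup.mem_zpowers g)
        refine ⟨key t hpair.1, ?_⟩
        have := key t⁻¹ (by simpa using hpair.2)
        simpa using this
      | one => exact ⟨fun n hn => by simpa using hn, fun n hn => by simpa using hn⟩
      | mul x y hx hy ihx ihy =>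
        constructor
        · intro n hn
          have h1 : x * y * n * (x * y)⁻¹ = x * (y * n * y⁻¹) * x⁻¹ := by group
          rw [h1]; exact ihx.1 _ (ihy.1 n hn)
        · intro n hn
          have h1 : (x * y)⁻¹ * n * (x * y) = y⁻¹ * (x⁻¹ * n * x) * y := by group
          rw [h1]; exact ihy.2 _ (ihx.2 n hn)
      | inv x hx ihx =>
        exact ⟨fun n hn => by simpa using ihx.2 n hn, fun n hn => by simpa using ihx.1 n hn⟩
    exact main.1

lemma zmod_one_ne_zero (n : ℕ) (hn : 2 ≤ n) : (1 : ZMod n) ≠ 0 := by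
  intro h
  have h2 : ((1 : ℕ) : ZMod n) = 0 := by simpa using h
  rw [ZMod.natCast_eq_zero_iff] at h2
  have := Nat.le_of_dvd one_pos h2
  omega

lemma zmod_neg_one_ne_zero (n : ℕ) (hn : 2 ≤ n) : (-1 : ZMod n) ≠ 0 := by
  intro h
  exact zmod_one_ne_zero n hn (by simpa using congrArg Neg.neg h)

lemma zmod_one_ne_neg_one (n : ℕ) (hn : 3 ≤ n) : (1 : ZMod n) ≠ -1 := by
  intro h
  have h2 : ((2 : ℕ) : ZMod n) = 0 := by push_cast; linear_combination h
  rw [ZMod.natCast_eq_zero_iff] at h2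
  have := Nat.le_of_dvd (by omega) h2
  omega

end Stmt3Aux

section Stmt3Perm

variable {r s : ℕ}

lemma muSqP_apply_coe (hre : 2 ∣ r) (hr0 : r ≠ 0) (x : XPlus r s) :
    (muSqP r s hre hr0 x : ZMod r × ZMod s) = (x.1.1 + 2, x.1.2) := rfl

lemma sigmaMuNuP_apply_coe (hre : 2 ∣ r) (hr0 : r ≠ 0) (hse : 2 ∣ s) (hs0 : s ≠ 0)
    (x : XPlus r s) :
    (sigmaMuNuP r s hre hr0 hse hs0 x : ZMod r × ZMod s) = (-(x.1.1 + 1), x.1.2 + 1) := rfl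

lemma tauP_apply_coe (hre : 2 ∣ r) (hr0 : r ≠ 0) (hse : 2 ∣ s) (hs0 : s ≠ 0)
    (x : XPlus r s) :
    (tauP r s hre hr0 hse hs0 x : ZMod r × ZMod s) = (-x.1.1, -x.1.2) := rfl

lemma muSqP_pow_apply (hre : 2 ∣ r) (hr0 : r ≠ 0) (d : ℕ) (x : XPlus r s) :
    ((muSqP r s hre hr0 ^ d) x : ZMod r × ZMod s) = (x.1.1 + (2 * d : ℕ), x.1.2) := by
  induction d generalizing x with
  | zero => simp
  | succ n ih =>
    rw [pow_succ, Equiv.Perm.mul_apply, ih, muSqP_apply_coe, Prod.mk.injEq]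
    constructor
    · push_cast; ring
    · rfl

lemma sigmaMuNuP_sq_apply (hre : 2 ∣ r) (hr0 : r ≠ 0) (hse : 2 ∣ s) (hs0 : s ≠ 0)
    (x : XPlus r s) :
    ((sigmaMuNuP r s hre hr0 hse hs0 ^ 2) x : ZMod r × ZMod s) = (x.1.1, x.1.2 + 2) := by
  rw [sq, Equiv.Perm.mul_apply, sigmaMuNuP_apply_coe, sigmaMuNuP_apply_coe, Prod.mk.injEq]
  constructor
  · ring
  · ring

lemma sigmaMuNuP_pow_apply (hre : 2 ∣ r) (hr0 : r ≠ 0) (hse : 2 ∣ s) (hs0 : s ≠ 0)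
    (d : ℕ) (x : XPlus r s) :
    ((sigmaMuNuP r s hre hr0 hse hs0 ^ (2 * d)) x : ZMod r × ZMod s)
      = (x.1.1, x.1.2 + (2 * d : ℕ)) := by
  induction d generalizing x with
  | zero => simp
  | succ n ih =>
    have h1 : 2 * (n + 1) = 2 * n + 2 := by ring
    rw [h1, pow_add, Equiv.Perm.mul_apply, ih, sigmaMuNuP_sq_apply, Prod.mk.injEq]
    constructor
    · rfl
    · push_cast; ring

end Stmt3Perm

section Stmt3Core

lemma core_not_basic {r s : ℕ} (hre : 2 ∣ r) (hr0 : r ≠ 0) (hse : 2 ∣ s) (hs0 : s ≠ 0)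
    {β : Type*} (g : Equiv.Perm (XPlus r s)) (f : XPlus r s → β)
    (hgH : g ∈ HPlusGroup r s hre hr0 hse hs0)
    (hconj : ∀ t ∈ ({muSqP r s hre hr0, sigmaMuNuP r s hre hr0 hse hs0,
        tauP r s hre hr0 hse hs0} : Set (Equiv.Perm (XPlus r s))),
      t * g = g * t ∨ g * (t * g) = t)
    (hfg : ∀ x, f (g x) = f x)
    (x0 : XPlus r s) (hx0 : g x0 ≠ x0)
    (v a b c : XPlus r s)
    (hva : (GammaPlus r s).Adj v a) (hvb : (GammaPlus r s).Adj v b)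
    (hvc : (GammaPlus r s).Adj v c)
    (hfva : f v ≠ f a) (hfvb : f v ≠ f b) (hfvc : f v ≠ f c)
    (hfab : f a ≠ f b) (hfac : f a ≠ f c) (hfbc : f b ≠ f c)
    (hbasic : IsBasic (GammaPlus r s) (HPlusGroup r s hre hr0 hse hs0)) : False := by
  haveI : NeZero r := ⟨hr0⟩
  haveI : NeZero s := ⟨hs0⟩
  set N := Subgroup.zpowers g with hN
  have hNH : NormalIn N (HPlusGroup r s hre hr0 hse hs0) :=
    normalIn_zpowers _ g hgH hconj
  have hNbot : N ≠ ⊥ := by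
    intro h
    have hgN : g ∈ N := Subgroup.mem_zpowers g
    rw [h, Subgroup.mem_bot] at hgN
    exact hx0 (by rw [hgN]; rfl)
  have hK : ∀ (k : ℤ) (z : XPlus r s), f ((g ^ k) z) = f z := by
    intro k
    induction k using Int.induction_on with
    | zero => intro z; simp
    | succ i ih =>
      intro z
      rw [zpow_add_one, Equiv.Perm.mul_apply, ih (g z), hfg z]
    | pred i ih =>
      intro z
      rw [zpow_sub_one, Equiv.Perm.mul_apply, ih (g⁻¹ z)]
      conv_rhs => rw [← (show g (g⁻¹ z) = z by simp), hfg]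
  have horb : ∀ x y : XPlus r s,
      Quotient.mk (orbitSetoid N) x = Quotient.mk (orbitSetoid N) y → f x = f y := by
    intro x y hxy
    rw [Quotient.eq] at hxy
    change x ∈ MulAction.orbit N y at hxy
    rw [MulAction.mem_orbit_iff] at hxy
    obtain ⟨n, hn⟩ := hxy
    obtain ⟨k, hk⟩ := Subgroup.mem_zpowers_iff.mp n.2
    have hx : (g ^ k) y = x := by rw [hk]; exact hn
    rw [← hx, hK]
  have hne : ∀ x y : XPlus r s, f x ≠ f y →
      Quotient.mk (orbitSetoid N) x ≠ Quotient.mk (orbitSetoid N) y :=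
    fun x y hf h => hf (horb x y h)
  have hadj : ∀ x y : XPlus r s, (GammaPlus r s).Adj x y → f x ≠ f y →
      (quotientGraph (GammaPlus r s) N).Adj (Quotient.mk (orbitSetoid N) x)
        (Quotient.mk (orbitSetoid N) y) := by
    intro x y hxy hf
    rw [quotientGraph, SimpleGraph.fromRel_adj]
    exact ⟨hne x y hf, Or.inl ⟨x, y, rfl, rfl, hxy⟩⟩
  rcases hbasic N hNH hNbot with hcard | hcyc
  · classical
    haveI : Fintype (Quotient (orbitSetoid N)) := Fintype.ofFinite _
    set qv := Quotient.mk (orbitSetoid N) v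
    set qa := Quotient.mk (orbitSetoid N) a
    set qb := Quotient.mk (orbitSetoid N) b
    have h1 : qv ≠ qa := hne v a hfva
    have h2 : qv ≠ qb := hne v b hfvb
    have h3 : qa ≠ qb := hne a b hfab
    have hle : ({qv, qa, qb} : Finset _).card ≤ Nat.card (Quotient (orbitSetoid N)) := by
      rw [Nat.card_eq_fintype_card]
      exact Finset.card_le_univ _
    have hc : ({qv, qa, qb} : Finset _).card = 3 := by
      rw [Finset.card_insert_of_notMem (by simp [h1, h2]),
        Finset.card_insert_of_notMem (by simp [h3]), Finset.card_singleton]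
    omega
  · exact isoCycle_no_three hcyc (hne a b hfab) (hne a c hfac) (hne b c hfbc)
      (hadj v a hva hfva) (hadj v b hvb hfvb) (hadj v c hvc hfvc)

end Stmt3Core

section Stmt3Side

lemma r_side (r s : ℕ) (hr : 3 ≤ r) (hs : 3 ≤ s) (hre : 2 ∣ r) (hse : 2 ∣ s)
    (d : ℕ) (hd2 : 2 ≤ d) (hdr : 2 * d ∣ r) (hdlt : 2 * d < r)
    (hbasic : IsBasic (GammaPlus r s)
      (HPlusGroup r s hre (by omega) hse (by omega))) : False := by
  have hr0 : r ≠ 0 := by omega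
  have hs0 : s ≠ 0 := by omega
  haveI : NeZero r := ⟨hr0⟩
  haveI : NeZero s := ⟨hs0⟩
  haveI : Fact (1 < r) := ⟨by omega⟩
  haveI : Fact (1 < s) := ⟨by omega⟩
  set g : Equiv.Perm (XPlus r s) := muSqP r s hre hr0 ^ d with hg
  set f : XPlus r s → ZMod (2 * d) × ZMod s :=
    fun x => (ZMod.castHom hdr (ZMod (2 * d)) x.1.1, x.1.2) with hf
  -- group membership
  have hgH : g ∈ HPlusGroup r s hre hr0 hse hs0 :=
    pow_mem (Subgroup.subset_closure (by simp)) d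
  -- conjugation
  have hconj : ∀ t ∈ ({muSqP r s hre hr0, sigmaMuNuP r s hre hr0 hse hs0,
      tauP r s hre hr0 hse hs0} : Set (Equiv.Perm (XPlus r s))),
      t * g = g * t ∨ g * (t * g) = t := by
    intro t ht
    simp only [Set.mem_insert_iff, Set.mem_singleton_iff] at ht
    rcases ht with rfl | rfl | rfl
    · exact Or.inl ((Commute.refl _).pow_right d)
    · refine Or.inr (Equiv.ext fun x => Subtype.ext ?_)
      simp only [hg, Equiv.Perm.mul_apply, muSqP_pow_apply, sigmaMuNuP_apply_coe, Prod.mk.injEq]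
      exact ⟨by ring, trivial⟩
    · refine Or.inr (Equiv.ext fun x => Subtype.ext ?_)
      simp only [hg, Equiv.Perm.mul_apply, muSqP_pow_apply, tauP_apply_coe, Prod.mk.injEq]
      exact ⟨by ring, trivial⟩
  -- f-invariance
  have hfg : ∀ x, f (g x) = f x := by
    intro x
    simp only [hf, hg, muSqP_pow_apply, map_add, map_natCast, ZMod.natCast_self,
      add_zero]
  -- points
  have hv : ((0, 0) : ZMod r × ZMod s) ∈ XPlus r s := by
    simp [XPlus, ZMod.val_zero]
  have ha : ((1, 1) : ZMod r × ZMod s) ∈ XPlus r s := by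
    simp [XPlus, ZMod.val_one]
  have hb : ((-1, 1) : ZMod r × ZMod s) ∈ XPlus r s := by
    simp only [XPlus, Set.mem_setOf_eq]
    rw [val_neg_mod_two r hre hr0, ZMod.val_one, ZMod.val_one]
  have hc : ((1, -1) : ZMod r × ZMod s) ∈ XPlus r s := by
    simp only [XPlus, Set.mem_setOf_eq]
    rw [val_neg_mod_two s hse hs0, ZMod.val_one, ZMod.val_one]
  set v : XPlus r s := ⟨(0, 0), hv⟩
  set a : XPlus r s := ⟨(1, 1), ha⟩
  set b : XPlus r s := ⟨(-1, 1), hb⟩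
  set c : XPlus r s := ⟨(1, -1), hc⟩
  have hx0 : g v ≠ v := by
    intro h
    have h2 : (g v : ZMod r × ZMod s) = (v : ZMod r × ZMod s) := congrArg _ h
    rw [muSqP_pow_apply] at h2
    have h3 : ((2 * d : ℕ) : ZMod r) = 0 := by
      have h4 := congrArg Prod.fst h2
      simpa using h4
    rw [ZMod.natCast_eq_zero_iff] at h3
    have := Nat.le_of_dvd (by omega) h3
    omega
  -- adjacency
  have hG : ∀ x y : XPlus r s, x.1 ≠ y.1 → gammaRel r s x.1 y.1 → (GammaPlus r s).Adj x y := by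
    intro x y hne hrel
    show (Gamma r s).Adj x.1 y.1
    rw [Gamma, SimpleGraph.fromRel_adj]
    exact ⟨hne, Or.inl hrel⟩
  have h1r : (1 : ZMod r) ≠ 0 := zmod_one_ne_zero r (by omega)
  have h1s : (1 : ZMod s) ≠ 0 := zmod_one_ne_zero s (by omega)
  have hm1s : (-1 : ZMod s) ≠ 0 := zmod_neg_one_ne_zero s (by omega)
  have h1m1s : (1 : ZMod s) ≠ -1 := zmod_one_ne_neg_one s (by omega)
  have h1m1d : (1 : ZMod (2 * d)) ≠ -1 := zmod_one_ne_neg_one (2 * d) (by omega)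
  have hva : (GammaPlus r s).Adj v a := by
    refine hG v a (fun h => h1r (congrArg Prod.fst h).symm) ?_
    exact ⟨Or.inl (zero_add 1).symm, Or.inl (zero_add 1).symm⟩
  have hvb : (GammaPlus r s).Adj v b := by
    refine hG v b (fun h => h1s (congrArg Prod.snd h).symm) ?_
    exact ⟨Or.inr (zero_sub 1).symm, Or.inl (zero_add 1).symm⟩
  have hvc : (GammaPlus r s).Adj v c := by
    refine hG v c (fun h => h1r (congrArg Prod.fst h).symm) ?_
    exact ⟨Or.inl (zero_add 1).symm, Or.inr (zero_sub 1).symm⟩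
  -- f-values
  have hfv : f v = (0, 0) := by
    show ((ZMod.castHom hdr (ZMod (2 * d))) (0 : ZMod r), (0 : ZMod s)) = (0, 0)
    rw [map_zero]
  have hfa : f a = (1, 1) := by
    show ((ZMod.castHom hdr (ZMod (2 * d))) (1 : ZMod r), (1 : ZMod s)) = (1, 1)
    rw [map_one]
  have hfb : f b = (-1, 1) := by
    show ((ZMod.castHom hdr (ZMod (2 * d))) (-1 : ZMod r), (1 : ZMod s)) = (-1, 1)
    rw [map_neg, map_one]
  have hfc : f c = (1, -1) := by
    show ((ZMod.castHom hdr (ZMod (2 * d))) (1 : ZMod r), (-1 : ZMod s)) = (1, -1)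
    rw [map_one]
  refine core_not_basic hre hr0 hse hs0 g f hgH hconj hfg v hx0 v a b c hva hvb hvc
    ?_ ?_ ?_ ?_ ?_ ?_ hbasic
  · rw [hfv, hfa]; exact fun h => h1s (congrArg Prod.snd h).symm
  · rw [hfv, hfb]; exact fun h => h1s (congrArg Prod.snd h).symm
  · rw [hfv, hfc]; exact fun h => hm1s (congrArg Prod.snd h).symm
  · rw [hfa, hfb]; exact fun h => h1m1d (congrArg Prod.fst h)
  · rw [hfa, hfc]; exact fun h => h1m1s (congrArg Prod.snd h)
  · rw [hfb, hfc]; exact fun h => h1m1s (congrArg Prod.snd h)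

end Stmt3Side

section Stmt3SideS

lemma s_side (r s : ℕ) (hr : 3 ≤ r) (hs : 3 ≤ s) (hre : 2 ∣ r) (hse : 2 ∣ s)
    (d : ℕ) (hd2 : 2 ≤ d) (hds : 2 * d ∣ s) (hdlt : 2 * d < s)
    (hbasic : IsBasic (GammaPlus r s)
      (HPlusGroup r s hre (by omega) hse (by omega))) : False := by
  have hr0 : r ≠ 0 := by omega
  have hs0 : s ≠ 0 := by omega
  haveI : NeZero r := ⟨hr0⟩
  haveI : NeZero s := ⟨hs0⟩
  haveI : Fact (1 < r) := ⟨by omega⟩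
  haveI : Fact (1 < s) := ⟨by omega⟩
  set g : Equiv.Perm (XPlus r s) := sigmaMuNuP r s hre hr0 hse hs0 ^ (2 * d) with hg
  set f : XPlus r s → ZMod r × ZMod (2 * d) :=
    fun x => (x.1.1, ZMod.castHom hds (ZMod (2 * d)) x.1.2) with hf
  have hgH : g ∈ HPlusGroup r s hre hr0 hse hs0 :=
    pow_mem (Subgroup.subset_closure (by simp)) (2 * d)
  have hconj : ∀ t ∈ ({muSqP r s hre hr0, sigmaMuNuP r s hre hr0 hse hs0,
      tauP r s hre hr0 hse hs0} : Set (Equiv.Perm (XPlus r s))),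
      t * g = g * t ∨ g * (t * g) = t := by
    intro t ht
    simp only [Set.mem_insert_iff, Set.mem_singleton_iff] at ht
    rcases ht with rfl | rfl | rfl
    · refine Or.inl (Equiv.ext fun x => Subtype.ext ?_)
      simp only [hg, Equiv.Perm.mul_apply, sigmaMuNuP_pow_apply, muSqP_apply_coe,
        Prod.mk.injEq]
      all_goals first | (constructor <;> ring) | ring
    · exact Or.inl ((Commute.refl _).pow_right (2 * d))
    · refine Or.inr (Equiv.ext fun x => Subtype.ext ?_)
      simp only [hg, Equiv.Perm.mul_apply, sigmaMuNuP_pow_apply, tauP_apply_coe,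
        Prod.mk.injEq]
      exact ⟨trivial, by ring⟩
  have hfg : ∀ x, f (g x) = f x := by
    intro x
    simp only [hf, hg, sigmaMuNuP_pow_apply, map_add, map_natCast, ZMod.natCast_self,
      add_zero]
  have hv : ((0, 0) : ZMod r × ZMod s) ∈ XPlus r s := by
    simp [XPlus, ZMod.val_zero]
  have ha : ((1, 1) : ZMod r × ZMod s) ∈ XPlus r s := by
    simp [XPlus, ZMod.val_one]
  have hb : ((1, -1) : ZMod r × ZMod s) ∈ XPlus r s := by
    simp only [XPlus, Set.mem_setOf_eq]
    rw [val_neg_mod_two s hse hs0, ZMod.val_one, ZMod.val_one]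
  have hc : ((-1, 1) : ZMod r × ZMod s) ∈ XPlus r s := by
    simp only [XPlus, Set.mem_setOf_eq]
    rw [val_neg_mod_two r hre hr0, ZMod.val_one, ZMod.val_one]
  set v : XPlus r s := ⟨(0, 0), hv⟩
  set a : XPlus r s := ⟨(1, 1), ha⟩
  set b : XPlus r s := ⟨(1, -1), hb⟩
  set c : XPlus r s := ⟨(-1, 1), hc⟩
  have hx0 : g v ≠ v := by
    intro h
    have h2 : (g v : ZMod r × ZMod s) = (v : ZMod r × ZMod s) := congrArg _ h
    rw [sigmaMuNuP_pow_apply] at h2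
    have h3 : ((2 * d : ℕ) : ZMod s) = 0 := by
      have h4 := congrArg Prod.snd h2
      simpa using h4
    rw [ZMod.natCast_eq_zero_iff] at h3
    have := Nat.le_of_dvd (by omega) h3
    omega
  have hG : ∀ x y : XPlus r s, x.1 ≠ y.1 → gammaRel r s x.1 y.1 → (GammaPlus r s).Adj x y := by
    intro x y hne hrel
    show (Gamma r s).Adj x.1 y.1
    rw [Gamma, SimpleGraph.fromRel_adj]
    exact ⟨hne, Or.inl hrel⟩
  have h1r : (1 : ZMod r) ≠ 0 := zmod_one_ne_zero r (by omega)
  have h1s : (1 : ZMod s) ≠ 0 := zmod_one_ne_zero s (by omega)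
  have hm1r : (-1 : ZMod r) ≠ 0 := zmod_neg_one_ne_zero r (by omega)
  have h1m1r : (1 : ZMod r) ≠ -1 := zmod_one_ne_neg_one r (by omega)
  have h1m1d : (1 : ZMod (2 * d)) ≠ -1 := zmod_one_ne_neg_one (2 * d) (by omega)
  have hva : (GammaPlus r s).Adj v a := by
    refine hG v a (fun h => h1r (congrArg Prod.fst h).symm) ?_
    exact ⟨Or.inl (zero_add 1).symm, Or.inl (zero_add 1).symm⟩
  have hvb : (GammaPlus r s).Adj v b := by
    refine hG v b (fun h => h1r (congrArg Prod.fst h).symm) ?_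
    exact ⟨Or.inl (zero_add 1).symm, Or.inr (zero_sub 1).symm⟩
  have hvc : (GammaPlus r s).Adj v c := by
    refine hG v c (fun h => hm1r (congrArg Prod.fst h).symm) ?_
    exact ⟨Or.inr (zero_sub 1).symm, Or.inl (zero_add 1).symm⟩
  have hfv : f v = (0, 0) := by
    show ((0 : ZMod r), (ZMod.castHom hds (ZMod (2 * d))) (0 : ZMod s)) = (0, 0)
    rw [map_zero]
  have hfa : f a = (1, 1) := by
    show ((1 : ZMod r), (ZMod.castHom hds (ZMod (2 * d))) (1 : ZMod s)) = (1, 1)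
    rw [map_one]
  have hfb : f b = (1, -1) := by
    show ((1 : ZMod r), (ZMod.castHom hds (ZMod (2 * d))) (-1 : ZMod s)) = (1, -1)
    rw [map_neg, map_one]
  have hfc : f c = (-1, 1) := by
    show ((-1 : ZMod r), (ZMod.castHom hds (ZMod (2 * d))) (1 : ZMod s)) = (-1, 1)
    rw [map_one]
  refine core_not_basic hre hr0 hse hs0 g f hgH hconj hfg v hx0 v a b c hva hvb hvc
    ?_ ?_ ?_ ?_ ?_ ?_ hbasic
  · rw [hfv, hfa]; exact fun h => h1r (congrArg Prod.fst h).symm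
  · rw [hfv, hfb]; exact fun h => h1r (congrArg Prod.fst h).symm
  · rw [hfv, hfc]; exact fun h => hm1r (congrArg Prod.fst h).symm
  · rw [hfa, hfb]; exact fun h => h1m1d (congrArg Prod.snd h)
  · rw [hfa, hfc]; exact fun h => h1m1r (congrArg Prod.fst h)
  · rw [hfb, hfc]; exact fun h => h1m1r (congrArg Prod.fst h)

end Stmt3SideS

/-- if `(Γ⁺(r,s), H⁺(r,s))` (with `r,s ≥ 3` both even) is basic of cycle type,
then `(r,s)` is `(4,4)`, `(4,2p)`, `(2p,4)` or `(2p,2q)` for odd primes `p`, `q`. -/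
theorem stmt3 (r s : ℕ) (hr : 3 ≤ r) (hs : 3 ≤ s) (hre : 2 ∣ r) (hse : 2 ∣ s)
    (hbasic : BasicOfCycleType (GammaPlus r s)
      (HPlusGroup r s hre (by omega) hse (by omega))) :
    (r = 4 ∧ s = 4) ∨ (∃ p : ℕ, p.Prime ∧ Odd p ∧ r = 4 ∧ s = 2 * p) ∨
      (∃ p : ℕ, p.Prime ∧ Odd p ∧ r = 2 * p ∧ s = 4) ∨
      (∃ p q : ℕ, p.Prime ∧ Odd p ∧ q.Prime ∧ Odd q ∧ r = 2 * p ∧ s = 2 * q) := by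
  have hre' : 2 ∣ r := hre
  have hse' : 2 ∣ s := hse
  obtain ⟨p, hp⟩ := hre'
  obtain ⟨q, hq⟩ := hse'
  have hpprime : p.Prime := by
    by_contra hnp
    obtain ⟨d, hdvd, hd2, hdlt⟩ := Nat.exists_dvd_of_not_prime2 (by omega) hnp
    exact r_side r s hr hs hre hse d hd2
      (by rw [hp]; exact Nat.mul_dvd_mul_left 2 hdvd) (by omega) hbasic.1
  have hqprime : q.Prime := by
    by_contra hnq
    obtain ⟨d, hdvd, hd2, hdlt⟩ := Nat.exists_dvd_of_not_prime2 (by omega) hnq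
    exact s_side r s hr hs hre hse d hd2
      (by rw [hq]; exact Nat.mul_dvd_mul_left 2 hdvd) (by omega) hbasic.1
  rcases hpprime.eq_two_or_odd' with hp2 | hpodd <;>
    rcases hqprime.eq_two_or_odd' with hq2 | hqodd
  · exact Or.inl ⟨by omega, by omega⟩
  · exact Or.inr (Or.inl ⟨q, hqprime, hqodd, by omega, by omega⟩)
  · exact Or.inr (Or.inr (Or.inl ⟨p, hpprime, hpodd, by omega, by omega⟩))
  · exact Or.inr (Or.inr (Or.inr ⟨p, q, hpprime, hpodd, hqprime, hqodd, by omega, by omega⟩))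

end OG4
end

section
/- Let (r,s) be one of (4,4), (4,2p), (2p,4), or (2p,2q), where p and q are odd primes (not necessarily distinct). Then for every nontrivial normal subgroup L of H⁺(r,s), the normal quotient Γ⁺(r,s)_L either has at most 2 vertices or is isomorphic to a cycle graph C_m for some m ≥ 3; moreover the normal quotients of Γ⁺(r,s) by ⟨μ²⟩ and by ⟨ν²⟩ are each isomorphic to a cycle C_m with m ≥ 3. In particular, (Γ⁺(r,s), H⁺(r,s)) is basic of cycle type. -/
open SimpleGraph

namespace OG4

variable {V : Type*} {W : Type*}

/-! ### Auxiliary development -/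

section parityAux

/-- evenness of an element of `ZMod n` (for `n` even). -/
def EvZ {n : ℕ} (k : ZMod n) : Prop := k.val % 2 = 0

lemma evZ_zero {n : ℕ} (h0 : n ≠ 0) : EvZ (0 : ZMod n) := by
  haveI : NeZero n := ⟨h0⟩
  simp [EvZ, ZMod.val_zero]

lemma evZ_add {n : ℕ} (hn : 2 ∣ n) (h0 : n ≠ 0) {a b : ZMod n} :
    EvZ (a + b) ↔ (EvZ a ↔ EvZ b) := by
  haveI : NeZero n := ⟨h0⟩
  have h : (a + b).val % 2 = (a.val + b.val) % 2 := by
    rw [ZMod.val_add, Nat.mod_mod_of_dvd _ hn]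
  unfold EvZ
  omega

lemma evZ_neg {n : ℕ} (hn : 2 ∣ n) (h0 : n ≠ 0) {a : ZMod n} : EvZ (-a) ↔ EvZ a := by
  unfold EvZ
  rw [OG4.val_neg_mod_two n hn h0]

lemma evZ_two {n : ℕ} (hn : 2 ∣ n) (h0 : n ≠ 0) : EvZ (2 : ZMod n) := by
  have h := OG4.val_add_two_mod_two n hn h0 0
  rw [zero_add] at h
  haveI : NeZero n := ⟨h0⟩
  unfold EvZ
  rw [h]
  simp [ZMod.val_zero]

lemma not_evZ_one {n : ℕ} (hn : 2 ∣ n) (h0 : n ≠ 0) : ¬ EvZ (1 : ZMod n) := by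
  have h := OG4.val_add_one_mod_two n hn h0 0
  rw [zero_add] at h
  haveI : NeZero n := ⟨h0⟩
  unfold EvZ
  rw [h]
  simp [ZMod.val_zero]

lemma evZ_double {n : ℕ} (hn : 2 ∣ n) (h0 : n ≠ 0) (t : ZMod n) : EvZ (2 * t) := by
  rw [two_mul, evZ_add hn h0]

lemma evZ_iff_exists {n : ℕ} (hn : 2 ∣ n) (h0 : n ≠ 0) {a : ZMod n} :
    EvZ a ↔ ∃ t : ZMod n, a = 2 * t := by
  constructor
  · intro h
    haveI : NeZero n := ⟨h0⟩
    refine ⟨((a.val / 2 : ℕ) : ZMod n), ?_⟩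
    have h2 : 2 * (a.val / 2) = a.val := by unfold EvZ at h; omega
    have h3 : ((2 * (a.val / 2) : ℕ) : ZMod n) = ((a.val : ℕ) : ZMod n) := by rw [h2]
    rw [ZMod.natCast_val, ZMod.cast_id] at h3
    push_cast at h3
    exact h3.symm
  · rintro ⟨t, rfl⟩
    exact evZ_double hn h0 t

end parityAux
section goodAux

/-- `n = 4` or `n = 2p` for an odd prime `p`. -/
def GoodN (n : ℕ) : Prop := n = 4 ∨ ∃ p : ℕ, p.Prime ∧ Odd p ∧ n = 2 * p

lemma GoodN.two_dvd {n : ℕ} (h : GoodN n) : 2 ∣ n := by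
  rcases h with rfl | ⟨p, _, _, rfl⟩
  · norm_num
  · exact ⟨p, rfl⟩
lemma GoodN.four_le {n : ℕ} (h : GoodN n) : 4 ≤ n := by
  rcases h with rfl | ⟨p, hp, hop, rfl⟩
  · omega
  · have h2 := hp.two_le
    have : p ≠ 2 := by rintro rfl; exact (by decide : ¬ Odd 2) hop
    omega
lemma GoodN.ne_zero {n : ℕ} (h : GoodN n) : n ≠ 0 := by have := h.four_le; omega
lemma GoodN.exists_half {n : ℕ} (h : GoodN n) : ∃ m : ℕ, m.Prime ∧ n = 2 * m := by
  rcases h with rfl | ⟨p, hp, _, rfl⟩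
  · exact ⟨2, Nat.prime_two, rfl⟩
  · exact ⟨p, hp, rfl⟩

lemma goodN_two_ne_zero {n : ℕ} (h : GoodN n) : (2 : ZMod n) ≠ 0 := by
  have h4 := h.four_le
  intro hc
  have h5 : ((2:ℕ) : ZMod n) = 0 := by exact_mod_cast hc
  rw [ZMod.natCast_eq_zero_iff] at h5
  exact absurd (Nat.le_of_dvd (by norm_num) h5) (by omega)

/-- in `ZMod n` (`n` good), a nonzero even element generates all even elements. -/
lemma goodN_gen {n : ℕ} (h : GoodN n) {a : ZMod n} (hae : EvZ a) (ha : a ≠ 0)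
    {b : ZMod n} (hbe : EvZ b) : ∃ t : ℕ, (t : ZMod n) * a = b := by
  obtain ⟨m, hm, rfl⟩ := h.exists_half
  haveI : Fact m.Prime := ⟨hm⟩
  haveI : NeZero (2*m) := ⟨by have := hm.two_le; omega⟩
  set A := a.val with hA
  set B := b.val with hB
  have hAlt : A < 2*m := ZMod.val_lt a
  have hBlt : B < 2*m := ZMod.val_lt b
  have hA2 : 2 * (A/2) = A := by unfold EvZ at hae; omega
  have hB2 : 2 * (B/2) = B := by unfold EvZ at hbe; omega
  set a0 := A / 2 with ha0def
  set b0 := B / 2 with hb0def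
  have hcastA : ((A : ℕ) : ZMod (2*m)) = a := by rw [hA, ZMod.natCast_val, ZMod.cast_id]
  have hcastB : ((B : ℕ) : ZMod (2*m)) = b := by rw [hB, ZMod.natCast_val, ZMod.cast_id]
  have ha0 : (a0 : ZMod m) ≠ 0 := by
    intro hdvd
    rw [ZMod.natCast_eq_zero_iff] at hdvd
    apply ha
    obtain ⟨c, hc⟩ := hdvd
    have h6 : (2*m) ∣ A := ⟨c, by rw [← hA2, hc]; ring⟩
    rw [← hcastA, ZMod.natCast_eq_zero_iff]
    exact h6
  obtain ⟨u, hu⟩ : ∃ u : ZMod m, u * (a0 : ZMod m) = (b0 : ZMod m) :=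
    ⟨(b0 : ZMod m) * (a0 : ZMod m)⁻¹, by field_simp⟩
  refine ⟨u.val, ?_⟩
  have hmod : (u.val * a0) % m = b0 % m := by
    have h7 : ((u.val * a0 : ℕ) : ZMod m) = ((b0 : ℕ) : ZMod m) := by
      rw [Nat.cast_mul, ZMod.natCast_val, ZMod.cast_id]
      exact hu
    rwa [ZMod.natCast_eq_natCast_iff, Nat.ModEq] at h7
  have hmod2 : (u.val * A) % (2*m) = B % (2*m) := by
    have h8 := Nat.ModEq.mul_left' (c := 2) (hmod : Nat.ModEq m (u.val * a0) b0)
    have h9 : 2 * (u.val * a0) = u.val * A := by rw [← hA2]; ring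
    rwa [h9, hB2] at h8
  have h10 : ((u.val * A : ℕ) : ZMod (2*m)) = ((B : ℕ) : ZMod (2*m)) := by
    rw [ZMod.natCast_eq_natCast_iff]
    exact hmod2
  rw [Nat.cast_mul, hcastA, hcastB] at h10
  exact h10

/-- an odd element killed by 2 forces `n = 2q` with the element `q`. -/
lemma goodN_half_odd {n : ℕ} (h : GoodN n) {l : ZMod n} (hodd : ¬ EvZ l)
    (h2 : 2 * l = 0) : ∃ q : ℕ, q.Prime ∧ Odd q ∧ n = 2 * q ∧ l = (q : ZMod n) := by
  haveI : NeZero n := ⟨h.ne_zero⟩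
  have hcast : ((l.val : ℕ) : ZMod n) = l := by rw [ZMod.natCast_val, ZMod.cast_id]
  have hval : ((2 * l.val : ℕ) : ZMod n) = 0 := by
    rw [Nat.cast_mul, hcast]
    exact_mod_cast h2
  rw [ZMod.natCast_eq_zero_iff] at hval
  have hlt : l.val < n := ZMod.val_lt l
  rcases h with rfl | ⟨p, hp, hop, rfl⟩
  · exfalso
    unfold EvZ at hodd
    omega
  · refine ⟨p, hp, hop, rfl, ?_⟩
    have hpodd : p % 2 = 1 := Nat.odd_iff.mp hop
    have hp2 := hp.two_le
    have hlv : l.val = p := by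
      unfold EvZ at hodd
      rcases hval with ⟨c, hc⟩
      have hc2 : c ≤ 1 := by nlinarith
      interval_cases c <;> omega
    rw [← hcast, hlv]

lemma goodN_four_ne_zero {n : ℕ} (h : GoodN n) (hn4 : n ≠ 4) : (4 : ZMod n) ≠ 0 := by
  intro hc
  have h5 : ((4:ℕ) : ZMod n) = 0 := by exact_mod_cast hc
  rw [ZMod.natCast_eq_zero_iff] at h5
  have h4 := h.four_le
  have hle := Nat.le_of_dvd (by norm_num) h5
  exact hn4 (by omega)

end goodAux
section shapesAux

variable {r s : ℕ}

lemma mem_XPlus {x : ZMod r × ZMod s} : x ∈ XPlus r s ↔ x.1.val % 2 = x.2.val % 2 :=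
  Iff.rfl

lemma mem_XPlus_evZ {x : ZMod r × ZMod s} : x ∈ XPlus r s ↔ (EvZ x.1 ↔ EvZ x.2) := by
  rw [mem_XPlus]
  unfold EvZ
  omega

/-- sign attached to a `Bool`. -/
def sgn (e : Bool) (n : ℕ) : ZMod n := if e then -1 else 1

lemma sgn_mul (e e' : Bool) (n : ℕ) : sgn (xor e e') n = sgn e n * sgn e' n := by
  cases e <;> cases e' <;> simp [sgn]

lemma sgn_sq (e : Bool) (n : ℕ) : sgn e n * sgn e n = 1 := by
  cases e <;> simp [sgn]

lemma evZ_sgn_mul (hn : 2 ∣ n) (h0 : n ≠ 0) (e : Bool) (k : ZMod n) :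
    EvZ (sgn e n * k) ↔ EvZ k := by
  cases e <;> simp [sgn, neg_mul, evZ_neg hn h0]

lemma sgn_injective {n : ℕ} (hn : (2:ZMod n) ≠ 0) {e e' : Bool}
    (h : sgn e n = sgn e' n) : e = e' := by
  cases e <;> cases e' <;> simp_all [sgn]
  · exact hn (by linear_combination h)
  · exact hn (by linear_combination -h)

/-- `f` acts affinely with signs `e₁ e₂` and shifts `k l`. -/
def IsShape (f : Equiv.Perm (XPlus r s)) (e₁ e₂ : Bool) (k : ZMod r) (l : ZMod s) : Prop :=
  ∀ x : XPlus r s,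
    ((f x : ZMod r × ZMod s).1 = sgn e₁ r * (x : ZMod r × ZMod s).1 + k) ∧
    ((f x : ZMod r × ZMod s).2 = sgn e₂ s * (x : ZMod r × ZMod s).2 + l)

/-- `f` has a shape with the parity constraints of elements of `H⁺`. -/
def Shaped (f : Equiv.Perm (XPlus r s)) : Prop :=
  ∃ e₁ e₂ k l, IsShape f e₁ e₂ k l ∧ (EvZ k ↔ (e₁ = e₂)) ∧ (EvZ l ↔ (e₁ = e₂))

lemma isShape_one : IsShape (1 : Equiv.Perm (XPlus r s)) false false 0 0 := by
  intro x
  simp [sgn]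

lemma isShape_mul {f g : Equiv.Perm (XPlus r s)} {e₁ e₂ d₁ d₂ : Bool}
    {k : ZMod r} {l : ZMod s} {k' : ZMod r} {l' : ZMod s}
    (hf : IsShape f e₁ e₂ k l) (hg : IsShape g d₁ d₂ k' l') :
    IsShape (f * g) (xor e₁ d₁) (xor e₂ d₂) (sgn e₁ r * k' + k) (sgn e₂ s * l' + l) := by
  intro x
  have h1 := hf (g x)
  have h2 := hg x
  constructor
  · rw [show ((f * g) x : ZMod r × ZMod s).1 = ((f (g x)) : ZMod r × ZMod s).1 from rfl,
      h1.1, h2.1, sgn_mul]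
    ring
  · rw [show ((f * g) x : ZMod r × ZMod s).2 = ((f (g x)) : ZMod r × ZMod s).2 from rfl,
      h1.2, h2.2, sgn_mul]
    ring

lemma isShape_inv {f : Equiv.Perm (XPlus r s)} {e₁ e₂ : Bool} {k : ZMod r} {l : ZMod s}
    (hf : IsShape f e₁ e₂ k l) :
    IsShape f⁻¹ e₁ e₂ (-(sgn e₁ r * k)) (-(sgn e₂ s * l)) := by
  intro x
  have h1 := hf (f⁻¹ x)
  rw [show f (f⁻¹ x) = x from f.apply_symm_apply x] at h1
  constructor
  · have := h1.1
    have h2 : sgn e₁ r * (x : ZMod r × ZMod s).1 =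
        sgn e₁ r * sgn e₁ r * ((f⁻¹ x : XPlus r s) : ZMod r × ZMod s).1 + sgn e₁ r * k := by
      rw [this]; ring
    rw [sgn_sq, one_mul] at h2
    linear_combination -h2
  · have := h1.2
    have h2 : sgn e₂ s * (x : ZMod r × ZMod s).2 =
        sgn e₂ s * sgn e₂ s * ((f⁻¹ x : XPlus r s) : ZMod r × ZMod s).2 + sgn e₂ s * l := by
      rw [this]; ring
    rw [sgn_sq, one_mul] at h2
    linear_combination -h2

lemma shaped_one (hr0 : r ≠ 0) (hs0 : s ≠ 0) : Shaped (1 : Equiv.Perm (XPlus r s)) :=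
  ⟨false, false, 0, 0, isShape_one, iff_of_true (evZ_zero hr0) rfl,
    iff_of_true (evZ_zero hs0) rfl⟩

lemma shaped_mul (hr : 2 ∣ r) (hr0 : r ≠ 0) (hs : 2 ∣ s) (hs0 : s ≠ 0)
    {f g : Equiv.Perm (XPlus r s)} (hf : Shaped f) (hg : Shaped g) : Shaped (f * g) := by
  obtain ⟨e₁, e₂, k, l, hf, hk, hl⟩ := hf
  obtain ⟨d₁, d₂, k', l', hg, hk', hl'⟩ := hg
  refine ⟨_, _, _, _, isShape_mul hf hg, ?_, ?_⟩
  · rw [evZ_add hr hr0, evZ_sgn_mul hr hr0, hk', hk]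
    cases e₁ <;> cases e₂ <;> cases d₁ <;> cases d₂ <;> simp
  · rw [evZ_add hs hs0, evZ_sgn_mul hs hs0, hl', hl]
    cases e₁ <;> cases e₂ <;> cases d₁ <;> cases d₂ <;> simp

lemma shaped_inv (hr : 2 ∣ r) (hr0 : r ≠ 0) (hs : 2 ∣ s) (hs0 : s ≠ 0)
    {f : Equiv.Perm (XPlus r s)} (hf : Shaped f) : Shaped f⁻¹ := by
  obtain ⟨e₁, e₂, k, l, hf, hk, hl⟩ := hf
  exact ⟨e₁, e₂, _, _, isShape_inv hf,
    by rwa [evZ_neg hr hr0, evZ_sgn_mul hr hr0],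
    by rwa [evZ_neg hs hs0, evZ_sgn_mul hs hs0]⟩

end shapesAux
section genShapes

variable {r s : ℕ}

lemma pt00_mem (hr0 : r ≠ 0) (hs0 : s ≠ 0) : ((0,0) : ZMod r × ZMod s) ∈ XPlus r s := by
  haveI : NeZero r := ⟨hr0⟩; haveI : NeZero s := ⟨hs0⟩
  simp [mem_XPlus, ZMod.val_zero]

lemma pt11_mem (hr : 4 ≤ r) (hs : 4 ≤ s) : ((1,1) : ZMod r × ZMod s) ∈ XPlus r s := by
  haveI : Fact (1 < r) := ⟨by omega⟩; haveI : Fact (1 < s) := ⟨by omega⟩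
  simp [mem_XPlus, ZMod.val_one]

/-- shape parameters are unique. -/
lemma isShape_unique (hgr : GoodN r) (hgs : GoodN s)
    {f : Equiv.Perm (XPlus r s)} {e₁ e₂ d₁ d₂ : Bool} {k k' : ZMod r} {l l' : ZMod s}
    (h1 : IsShape f e₁ e₂ k l) (h2 : IsShape f d₁ d₂ k' l') :
    e₁ = d₁ ∧ e₂ = d₂ ∧ k = k' ∧ l = l' := by
  have hx0 := h1 ⟨(0,0), pt00_mem hgr.ne_zero hgs.ne_zero⟩
  have hy0 := h2 ⟨(0,0), pt00_mem hgr.ne_zero hgs.ne_zero⟩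
  have hx1 := h1 ⟨(1,1), pt11_mem hgr.four_le hgs.four_le⟩
  have hy1 := h2 ⟨(1,1), pt11_mem hgr.four_le hgs.four_le⟩
  have hk : k = k' := by
    have := hx0.1.symm.trans hy0.1
    simpa using this
  have hl : l = l' := by
    have := hx0.2.symm.trans hy0.2
    simpa using this
  have he1 : e₁ = d₁ := by
    apply sgn_injective (goodN_two_ne_zero hgr)
    have := hx1.1.symm.trans hy1.1
    simp only [mul_one] at this
    rw [hk] at this
    exact add_right_cancel this
  have he2 : e₂ = d₂ := by
    apply sgn_injective (goodN_two_ne_zero hgs)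
    have := hx1.2.symm.trans hy1.2
    simp only [mul_one] at this
    rw [hl] at this
    exact add_right_cancel this
  exact ⟨he1, he2, hk, hl⟩

/-- a shape determines the permutation. -/
lemma eq_of_isShape {f g : Equiv.Perm (XPlus r s)} {e₁ e₂ : Bool} {k : ZMod r} {l : ZMod s}
    (h1 : IsShape f e₁ e₂ k l) (h2 : IsShape g e₁ e₂ k l) : f = g := by
  apply Equiv.ext
  intro x
  have a1 := h1 x
  have a2 := h2 x
  have : ((f x : ZMod r × ZMod s)) = ((g x : ZMod r × ZMod s)) := by
    ext
    · rw [a1.1, a2.1]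
    · rw [a1.2, a2.2]
  exact Subtype.ext this

variable (hre : 2 ∣ r) (hr0 : r ≠ 0) (hse : 2 ∣ s) (hs0 : s ≠ 0)

lemma isShape_muSqP : IsShape (muSqP r s hre hr0) false false 2 0 := by
  intro x
  simp [muSqP, muSq, Equiv.Perm.subtypePerm_apply, sgn]

lemma isShape_nuSqP : IsShape (nuSqP r s hse hs0) false false 0 2 := by
  intro x
  simp [nuSqP, nuSq, Equiv.Perm.subtypePerm_apply, sgn]

lemma isShape_sigmaMuNuP :
    IsShape (sigmaMuNuP r s hre hr0 hse hs0) true false (-1) 1 := by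
  intro x
  simp [sigmaMuNuP, sigmaMuNu, Equiv.Perm.subtypePerm_apply, sgn]
  ring

lemma isShape_tauP : IsShape (tauP r s hre hr0 hse hs0) true true 0 0 := by
  intro x
  simp [tauP, tau, Equiv.Perm.subtypePerm_apply, sgn]

/-- every element of `H⁺(r,s)` is shaped. -/
lemma shaped_of_mem_HPlus {f : Equiv.Perm (XPlus r s)}
    (hf : f ∈ HPlusGroup r s hre hr0 hse hs0) : Shaped f := by
  induction hf using Subgroup.closure_induction with
  | mem g hg =>
    rcases hg with rfl | rfl | rfl
    · exact ⟨false, false, 2, 0, isShape_muSqP hre hr0,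
        iff_of_true (evZ_two hre hr0) rfl, iff_of_true (evZ_zero hs0) rfl⟩
    · refine ⟨true, false, -1, 1, isShape_sigmaMuNuP hre hr0 hse hs0, ?_, ?_⟩
      · rw [evZ_neg hre hr0]
        simp [not_evZ_one hre hr0]
      · simp [not_evZ_one hse hs0]
    · exact ⟨true, true, 0, 0, isShape_tauP hre hr0 hse hs0,
        iff_of_true (evZ_zero hr0) rfl, iff_of_true (evZ_zero hs0) rfl⟩
  | one => exact shaped_one hr0 hs0
  | mul f g _ _ hf hg => exact shaped_mul hre hr0 hse hs0 hf hg
  | inv f _ hf => exact shaped_inv hre hr0 hse hs0 hf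

end genShapes
section orbitAux

variable {V : Type*}

lemma orbitSetoid_rel_iff (L : Subgroup (Equiv.Perm V)) (x y : V) :
    (orbitSetoid L).r x y ↔ ∃ g ∈ L, g y = x := by
  show x ∈ MulAction.orbit L y ↔ _
  rw [MulAction.mem_orbit_iff]
  constructor
  · rintro ⟨⟨g, hg⟩, h⟩
    exact ⟨g, hg, h⟩
  · rintro ⟨g, hg, h⟩
    exact ⟨⟨g, hg⟩, h⟩

lemma quotientMk_eq_iff (L : Subgroup (Equiv.Perm V)) (x y : V) :
    Quotient.mk (orbitSetoid L) x = Quotient.mk (orbitSetoid L) y ↔ ∃ g ∈ L, g y = x := by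
  rw [Quotient.eq]
  exact orbitSetoid_rel_iff L x y

lemma card_quot_le_two (L : Subgroup (Equiv.Perm V)) (u v : V)
    (h : ∀ z : V, (∃ g ∈ L, g u = z) ∨ (∃ g ∈ L, g v = z)) :
    Nat.card (Quotient (orbitSetoid L)) ≤ 2 := by
  have hsurj : Function.Surjective
      (fun b : Bool => if b then Quotient.mk (orbitSetoid L) u else Quotient.mk (orbitSetoid L) v) := by
    intro q
    obtain ⟨z, rfl⟩ := Quotient.exists_rep q
    rcases h z with ⟨g, hg, hz⟩ | ⟨g, hg, hz⟩
    · exact ⟨true, by simpa using ((quotientMk_eq_iff L z u).mpr ⟨g, hg, hz⟩).symm⟩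
    · exact ⟨false, by simpa using ((quotientMk_eq_iff L z v).mpr ⟨g, hg, hz⟩).symm⟩
  calc Nat.card (Quotient (orbitSetoid L)) ≤ Nat.card Bool :=
        Nat.card_le_card_of_surjective _ hsurj
    _ = 2 := by simp [Nat.card_eq_fintype_card]

/-- main tool: if the orbits of `L` are the fibers of a "cyclic coordinate" `c`, the
normal quotient is a cycle. -/
lemma isoCycle_of_fibers (Γ : SimpleGraph V) (L : Subgroup (Equiv.Perm V))
    (m : ℕ) (hm : 3 ≤ m) (c : V → ZMod m)
    (horb : ∀ x y : V, (∃ g ∈ L, g y = x) ↔ c x = c y)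
    (hsurj : ∀ k : ZMod m, ∃ x, c x = k)
    (hadj : ∀ x y, Γ.Adj x y → c y = c x + 1 ∨ c x = c y + 1)
    (hstep : ∀ k : ZMod m, ∃ x y, Γ.Adj x y ∧ c x = k ∧ c y = k + 1) :
    IsoCycle (quotientGraph Γ L) := by
  obtain ⟨n, rfl⟩ : ∃ n, m = n + 3 := ⟨m - 3, by omega⟩
  refine ⟨n + 3, hm, ⟨?_⟩⟩
  have hone : (1 : ZMod (n+3)) ≠ 0 := by
    haveI : Fact (1 < n + 3) := ⟨by omega⟩
    exact one_ne_zero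
  -- the equivalence
  have hlift : ∀ x y : V, (orbitSetoid L).r x y → c x = c y := by
    intro x y hxy
    exact (horb x y).mp ((orbitSetoid_rel_iff L x y).mp hxy)
  let cbar : Quotient (orbitSetoid L) → ZMod (n + 3) := Quotient.lift c hlift
  have hcbar : ∀ x : V, cbar (Quotient.mk (orbitSetoid L) x) = c x := fun _ => rfl
  have hbij : Function.Bijective cbar := by
    constructor
    · intro a b hab
      obtain ⟨x, rfl⟩ := Quotient.exists_rep a
      obtain ⟨y, rfl⟩ := Quotient.exists_rep b
      rw [hcbar, hcbar] at hab
      exact (quotientMk_eq_iff L x y).mpr ((horb x y).mpr hab)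
    · intro k
      obtain ⟨x, hx⟩ := hsurj k
      exact ⟨Quotient.mk _ x, hx⟩
  refine ⟨Equiv.ofBijective cbar hbij, ?_⟩
  intro a b
  show (cycleGraph (n+3)).Adj (cbar a) (cbar b) ↔ (quotientGraph Γ L).Adj a b
  obtain ⟨x, rfl⟩ := Quotient.exists_rep a
  obtain ⟨y, rfl⟩ := Quotient.exists_rep b
  rw [hcbar, hcbar]
  have hcyc : (cycleGraph (n+3)).Adj (c x) (c y) ↔ c x - c y = 1 ∨ c y - c x = 1 :=
    cycleGraph_adj
  rw [hcyc]
  unfold quotientGraph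
  rw [SimpleGraph.fromRel_adj]
  constructor
  · rintro (h1 | h1)
    · -- c x = c y + 1
      obtain ⟨x', y', hadj', hcx', hcy'⟩ := hstep (c y)
      have hx' : Quotient.mk (orbitSetoid L) y' = Quotient.mk (orbitSetoid L) x :=
        (quotientMk_eq_iff L y' x).mpr ((horb y' x).mpr (by linear_combination hcy' - h1))
      have hy' : Quotient.mk (orbitSetoid L) x' = Quotient.mk (orbitSetoid L) y :=
        (quotientMk_eq_iff L x' y).mpr ((horb x' y).mpr hcx')
      refine ⟨?_, Or.inr ⟨x', y', hy', hx', hadj'⟩⟩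
      · intro hc
        rw [Quotient.eq] at hc
        have := hlift x y hc
        rw [this] at h1
        simp at h1
        exact hone h1.symm
    · obtain ⟨x', y', hadj', hcx', hcy'⟩ := hstep (c x)
      have hx' : Quotient.mk (orbitSetoid L) x' = Quotient.mk (orbitSetoid L) x :=
        (quotientMk_eq_iff L x' x).mpr ((horb x' x).mpr hcx')
      have hy' : Quotient.mk (orbitSetoid L) y' = Quotient.mk (orbitSetoid L) y :=
        (quotientMk_eq_iff L y' y).mpr ((horb y' y).mpr (by linear_combination hcy' - h1))
      refine ⟨?_, Or.inl ⟨x', y', hx', hy', hadj'⟩⟩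
      · intro hc
        rw [Quotient.eq] at hc
        have := hlift x y hc
        rw [this] at h1
        simp at h1
        exact hone h1.symm
  · rintro ⟨hne, (⟨x', y', hx', hy', hadj'⟩ | ⟨y', x', hy', hx', hadj'⟩)⟩
    · have h1 : c x' = c x := (horb x' x).mp ((quotientMk_eq_iff L x' x).mp hx')
      have h2 : c y' = c y := (horb y' y).mp ((quotientMk_eq_iff L y' y).mp hy')
      rcases hadj x' y' hadj' with h3 | h3
      · right; rw [← h1, ← h2, h3]; ring
      · left; rw [← h1, ← h2, h3]; ring
    · have h1 : c y' = c y := (horb y' y).mp ((quotientMk_eq_iff L y' y).mp hy')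
      have h2 : c x' = c x := (horb x' x).mp ((quotientMk_eq_iff L x' x).mp hx')
      rcases hadj y' x' hadj' with h3 | h3
      · left; rw [← h1, ← h2, h3]; ring
      · right; rw [← h1, ← h2, h3]; ring

end orbitAux
section graphAux

variable {r s : ℕ}

lemma one_ne_zero_zmod_s8 {n : ℕ} (hn : 2 ≤ n) : (1 : ZMod n) ≠ 0 := by
  intro h
  have h5 : ((1:ℕ) : ZMod n) = 0 := by exact_mod_cast h
  rw [ZMod.natCast_eq_zero_iff] at h5
  have := Nat.le_of_dvd (by norm_num) h5
  omega

lemma gammaRel_symm {u v : ZMod r × ZMod s} (h : gammaRel r s u v) : gammaRel r s v u := by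
  obtain ⟨h1 | h1, h2 | h2⟩ := h
  · exact ⟨Or.inr (by rw [h1]; ring), Or.inr (by rw [h2]; ring)⟩
  · exact ⟨Or.inr (by rw [h1]; ring), Or.inl (by rw [h2]; ring)⟩
  · exact ⟨Or.inl (by rw [h1]; ring), Or.inr (by rw [h2]; ring)⟩
  · exact ⟨Or.inl (by rw [h1]; ring), Or.inl (by rw [h2]; ring)⟩

lemma gammaPlus_adj_iff {x y : XPlus r s} :
    (GammaPlus r s).Adj x y ↔ x ≠ y ∧ gammaRel r s (x : ZMod r × ZMod s) (y : ZMod r × ZMod s) := by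
  show (Gamma r s).Adj (x : ZMod r × ZMod s) (y : ZMod r × ZMod s) ↔ _
  rw [Gamma, SimpleGraph.fromRel_adj]
  constructor
  · rintro ⟨hne, h | h⟩
    · exact ⟨fun hc => hne (by rw [hc]), h⟩
    · exact ⟨fun hc => hne (by rw [hc]), gammaRel_symm h⟩
  · rintro ⟨hne, h⟩
    exact ⟨fun hc => hne (Subtype.ext hc), Or.inl h⟩

end graphAux
section rowsAux

variable {r s : ℕ}

lemma evZ_sub {n : ℕ} (hn : 2 ∣ n) (h0 : n ≠ 0) {a b : ZMod n} :
    EvZ (a - b) ↔ (EvZ a ↔ EvZ b) := by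
  rw [sub_eq_add_neg, evZ_add hn h0, evZ_neg hn h0]

lemma xplus_parity {x : XPlus r s} :
    EvZ (x : ZMod r × ZMod s).1 ↔ EvZ (x : ZMod r × ZMod s).2 :=
  mem_XPlus_evZ.mp x.2

lemma exists_in_row (hgr : GoodN r) (hgs : GoodN s) (k : ZMod s) :
    ∃ x : XPlus r s, (x : ZMod r × ZMod s).2 = k := by
  by_cases hk : EvZ k
  · refine ⟨⟨(0, k), ?_⟩, rfl⟩
    rw [mem_XPlus_evZ]
    exact iff_of_true (evZ_zero hgr.ne_zero) hk
  · refine ⟨⟨(1, k), ?_⟩, rfl⟩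
    rw [mem_XPlus_evZ]
    exact iff_of_false (not_evZ_one hgr.two_dvd hgr.ne_zero) hk

lemma exists_in_col (hgr : GoodN r) (hgs : GoodN s) (k : ZMod r) :
    ∃ x : XPlus r s, (x : ZMod r × ZMod s).1 = k := by
  by_cases hk : EvZ k
  · refine ⟨⟨(k, 0), ?_⟩, rfl⟩
    rw [mem_XPlus_evZ]
    exact iff_of_true hk (evZ_zero hgs.ne_zero)
  · refine ⟨⟨(k, 1), ?_⟩, rfl⟩
    rw [mem_XPlus_evZ]
    exact iff_of_false hk (not_evZ_one hgs.two_dvd hgs.ne_zero)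

/-- the neighbour `(x₁+1, x₂+1)`. -/
lemma step_mem (hgr : GoodN r) (hgs : GoodN s) (x : XPlus r s) :
    ((x : ZMod r × ZMod s).1 + 1, (x : ZMod r × ZMod s).2 + 1) ∈ XPlus r s := by
  rw [mem_XPlus_evZ]
  rw [evZ_add hgr.two_dvd hgr.ne_zero, evZ_add hgs.two_dvd hgs.ne_zero]
  have := @xplus_parity r s x
  have hr1 := not_evZ_one hgr.two_dvd hgr.ne_zero
  have hs1 := not_evZ_one hgs.two_dvd hgs.ne_zero
  tauto

lemma step_adj (hgr : GoodN r) (hgs : GoodN s) (x : XPlus r s) :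
    (GammaPlus r s).Adj x ⟨((x : ZMod r × ZMod s).1 + 1, (x : ZMod r × ZMod s).2 + 1),
      step_mem hgr hgs x⟩ := by
  rw [gammaPlus_adj_iff]
  constructor
  · intro hc
    have h0 := congrArg (fun z : XPlus r s => (z : ZMod r × ZMod s).2) hc
    simp only at h0
    have h1 : (1 : ZMod s) = 0 := by linear_combination -h0
    exact one_ne_zero_zmod_s8 (by have := hgs.four_le; omega) h1
  · exact ⟨Or.inl rfl, Or.inl rfl⟩

/-- rows quotient: if every element of `L` is a horizontal translation and all horizontal
translations occur, the quotient is `C_s`. -/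
lemma isoCycle_rows (hgr : GoodN r) (hgs : GoodN s) (L : Subgroup (Equiv.Perm (XPlus r s)))
    (hall : ∀ f ∈ L, ∃ α, IsShape f false false α 0)
    (hP : ∀ α : ZMod r, EvZ α → ∃ f ∈ L, IsShape f false false α 0) :
    IsoCycle (quotientGraph (GammaPlus r s) L) := by
  apply isoCycle_of_fibers (GammaPlus r s) L s (by have := hgs.four_le; omega)
    (fun x => (x : ZMod r × ZMod s).2)
  · intro x y
    constructor
    · rintro ⟨g, hg, rfl⟩
      obtain ⟨α, hα⟩ := hall g hg
      exact (hα y).2.trans (by simp [sgn])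
    · intro hxy
      have hpar : EvZ ((x : ZMod r × ZMod s).1 - (y : ZMod r × ZMod s).1) := by
        rw [evZ_sub hgr.two_dvd hgr.ne_zero]
        rw [@xplus_parity r s x, @xplus_parity r s y, hxy]
      obtain ⟨f, hf, hsh⟩ := hP _ hpar
      refine ⟨f, hf, ?_⟩
      apply Subtype.ext
      have h2 := hsh y
      have : ((f y : XPlus r s) : ZMod r × ZMod s) = (x : ZMod r × ZMod s) := by
        ext
        · rw [h2.1]; simp [sgn]
        · rw [h2.2]; simp [sgn, hxy]
      exact this
  · intro k
    obtain ⟨x, hx⟩ := exists_in_row hgr hgs k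
    exact ⟨x, hx⟩
  · intro x y hadj
    rw [gammaPlus_adj_iff] at hadj
    rcases hadj.2.2 with h | h
    · exact Or.inl h
    · right
      rw [h]
      ring
  · intro k
    obtain ⟨x, hx⟩ := exists_in_row hgr hgs k
    exact ⟨x, _, step_adj hgr hgs x, hx, by simp [hx]⟩

end rowsAux
section colsAux

variable {r s : ℕ}

lemma isoCycle_cols (hgr : GoodN r) (hgs : GoodN s) (L : Subgroup (Equiv.Perm (XPlus r s)))
    (hall : ∀ f ∈ L, ∃ β, IsShape f false false 0 β)
    (hQ : ∀ β : ZMod s, EvZ β → ∃ f ∈ L, IsShape f false false 0 β) :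
    IsoCycle (quotientGraph (GammaPlus r s) L) := by
  apply isoCycle_of_fibers (GammaPlus r s) L r (by have := hgr.four_le; omega)
    (fun x => (x : ZMod r × ZMod s).1)
  · intro x y
    constructor
    · rintro ⟨g, hg, rfl⟩
      obtain ⟨β, hβ⟩ := hall g hg
      exact (hβ y).1.trans (by simp [sgn])
    · intro hxy
      have hpar : EvZ ((x : ZMod r × ZMod s).2 - (y : ZMod r × ZMod s).2) := by
        rw [evZ_sub hgs.two_dvd hgs.ne_zero]
        rw [← @xplus_parity r s x, ← @xplus_parity r s y, hxy]
      obtain ⟨f, hf, hsh⟩ := hQ _ hpar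
      refine ⟨f, hf, ?_⟩
      apply Subtype.ext
      have h2 := hsh y
      have : ((f y : XPlus r s) : ZMod r × ZMod s) = (x : ZMod r × ZMod s) := by
        ext
        · rw [h2.1]; simp [sgn, hxy]
        · rw [h2.2]; simp [sgn]
      exact this
  · intro k
    obtain ⟨x, hx⟩ := exists_in_col hgr hgs k
    exact ⟨x, hx⟩
  · intro x y hadj
    rw [gammaPlus_adj_iff] at hadj
    rcases hadj.2.1 with h | h
    · exact Or.inl h
    · right
      rw [h]
      ring
  · intro k
    obtain ⟨x, hx⟩ := exists_in_col hgr hgs k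
    exact ⟨x, _, step_adj hgr hgs x, hx, by simp [hx]⟩

end colsAux

section castAux

lemma natCast_mod_dvd {q n x : ℕ} (h : q ∣ n) : ((x % n : ℕ) : ZMod q) = (x : ZMod q) := by
  conv_rhs => rw [← Nat.mod_add_div x n]
  push_cast
  have h0 : ((n : ℕ) : ZMod q) = 0 := by
    rw [ZMod.natCast_eq_zero_iff]
    exact h
  rw [h0]
  ring

/-- reduction `ZMod (2q) → ZMod q` splits fibers into pairs. -/
lemma zmod_half_cases {q : ℕ} (hq : 2 ≤ q) {n : ℕ} (hn : n = 2*q) (u v : ZMod n)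
    (h : ((u.val : ℕ) : ZMod q) = ((v.val : ℕ) : ZMod q)) :
    u = v ∨ u = v + ((q : ℕ) : ZMod n) := by
  subst hn
  haveI : NeZero (2*q) := ⟨by omega⟩
  rw [ZMod.natCast_eq_natCast_iff, Nat.ModEq] at h
  have hu : u.val < 2*q := ZMod.val_lt u
  have hv : v.val < 2*q := ZMod.val_lt v
  have hcu : ((u.val : ℕ) : ZMod (2*q)) = u := by rw [ZMod.natCast_val, ZMod.cast_id]
  have hcv : ((v.val : ℕ) : ZMod (2*q)) = v := by rw [ZMod.natCast_val, ZMod.cast_id]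
  have e1 := Nat.div_add_mod u.val q
  have e2 := Nat.div_add_mod v.val q
  have d1 : u.val / q < 2 := Nat.div_lt_of_lt_mul (by omega)
  have d2 : v.val / q < 2 := Nat.div_lt_of_lt_mul (by omega)
  set a1 := u.val / q with ha1
  set a2 := v.val / q with ha2
  have hcase : u.val = v.val ∨ u.val = v.val + q ∨ v.val = u.val + q := by
    interval_cases a1 <;> interval_cases a2 <;> omega
  have hqq : ((q:ℕ) : ZMod (2*q)) + ((q:ℕ) : ZMod (2*q)) = 0 := by
    have h2 : (((q + q : ℕ)) : ZMod (2*q)) = 0 := by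
      rw [ZMod.natCast_eq_zero_iff]
      exact ⟨1, by ring⟩
    push_cast at h2
    linear_combination h2
  rcases hcase with h1 | h1 | h1
  · left
    rw [← hcu, ← hcv, h1]
  · right
    rw [← hcu, ← hcv, h1]
    push_cast
    ring
  · right
    rw [← hcu, ← hcv, h1]
    push_cast
    linear_combination -hqq

lemma red_add {q n : ℕ} (hn : n = 2*q) (hq : 1 ≤ q) (a b : ZMod n) :
    (((a + b).val : ℕ) : ZMod q) = ((a.val : ℕ) : ZMod q) + ((b.val : ℕ) : ZMod q) := by
  subst hn
  haveI : NeZero (2*q) := ⟨by omega⟩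
  rw [ZMod.val_add, natCast_mod_dvd ⟨2, by ring⟩]
  push_cast
  ring

lemma red_q_eq_zero {q n : ℕ} (hn : n = 2*q) (hq : 1 ≤ q) :
    (((((q:ℕ)) : ZMod n)).val : ZMod q) = 0 := by
  subst hn
  haveI : NeZero (2*q) := ⟨by omega⟩
  have : (((q:ℕ) : ZMod (2*q))).val = q := ZMod.val_cast_of_lt (by omega)
  rw [this, ZMod.natCast_self]

lemma red_one {q n : ℕ} (hn : n = 2*q) (hq : 2 ≤ q) :
    ((((1 : ZMod n)).val : ℕ) : ZMod q) = 1 := by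
  subst hn
  haveI : Fact (1 < 2*q) := ⟨by omega⟩
  rw [ZMod.val_one]
  norm_num

lemma red_lift {q n : ℕ} (hn : n = 2*q) (hq : 1 ≤ q) (k : ZMod q) :
    ((((k.val : ℕ) : ZMod n)).val : ZMod q) = k := by
  subst hn
  haveI : NeZero q := ⟨by omega⟩
  haveI : NeZero (2*q) := ⟨by omega⟩
  have hlt : k.val < 2*q := lt_of_lt_of_le (ZMod.val_lt k) (by omega)
  rw [ZMod.val_cast_of_lt hlt, ZMod.natCast_val, ZMod.cast_id]

end castAux
section pairedAux

variable {r s : ℕ}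

lemma not_evZ_q {q n : ℕ} (hn : n = 2*q) (hq : Odd q) (hq2 : 2 ≤ q) :
    ¬ EvZ (((q:ℕ)) : ZMod n) := by
  subst hn
  haveI : NeZero (2*q) := ⟨by omega⟩
  unfold EvZ
  rw [ZMod.val_cast_of_lt (by omega)]
  have := Nat.odd_iff.mp hq
  omega

/-- paired-rows quotient: `C_q` where `s = 2q`. -/
lemma isoCycle_pairedRows (hgr : GoodN r) (hgs : GoodN s) {q : ℕ} (hq : q.Prime)
    (hoq : Odd q) (hsq : s = 2*q) (L : Subgroup (Equiv.Perm (XPlus r s)))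
    (hall : ∀ f ∈ L, (∃ α, IsShape f false false α 0) ∨
      (∃ κ, IsShape f true false κ (((q:ℕ)) : ZMod s) ∧ ¬ EvZ κ))
    (hP : ∀ α : ZMod r, EvZ α → ∃ f ∈ L, IsShape f false false α 0)
    (hglide : ∃ g ∈ L, ∃ κ, IsShape g true false κ (((q:ℕ)) : ZMod s) ∧ ¬ EvZ κ) :
    IsoCycle (quotientGraph (GammaPlus r s) L) := by
  have hq2 := hq.two_le
  have hq3 : 3 ≤ q := by
    rcases Nat.lt_or_ge q 3 with h | h
    · interval_cases q
      · exact absurd hoq (by decide)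
    · exact h
  apply isoCycle_of_fibers (GammaPlus r s) L q hq3
    (fun x => (((x : ZMod r × ZMod s).2.val : ℕ) : ZMod q))
  · intro x y
    constructor
    · rintro ⟨g, hg, rfl⟩
      rcases hall g hg with ⟨α, hα⟩ | ⟨κ, hκ, _⟩
      · have h2 := (hα y).2
        simp only [sgn] at h2
        rw [h2]
        norm_num
      · have h2 := (hκ y).2
        simp only [sgn] at h2
        rw [h2]
        norm_num
        rw [red_add hsq (by omega), red_q_eq_zero hsq (by omega)]
        ring
    · intro hxy
      rcases zmod_half_cases hq2 hsq _ _ hxy with hc | hc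
      · -- same row
        have hpar : EvZ ((x : ZMod r × ZMod s).1 - (y : ZMod r × ZMod s).1) := by
          rw [evZ_sub hgr.two_dvd hgr.ne_zero]
          rw [@xplus_parity r s x, @xplus_parity r s y, hc]
        obtain ⟨f, hf, hsh⟩ := hP _ hpar
        refine ⟨f, hf, Subtype.ext ?_⟩
        have h2 := hsh y
        ext
        · rw [h2.1]; simp [sgn]
        · rw [h2.2]; simp [sgn, hc]
      · -- opposite row : x.2 = y.2 + q
        obtain ⟨g, hg, κ, hκ, hκodd⟩ := hglide
        have hgy := hκ y
        -- need translation by x.1 - (-(y.1) + κ)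
        have hpar : EvZ ((x : ZMod r × ZMod s).1 - (-(y : ZMod r × ZMod s).1 + κ)) := by
          rw [evZ_sub hgr.two_dvd hgr.ne_zero, evZ_add hgr.two_dvd hgr.ne_zero,
            evZ_neg hgr.two_dvd hgr.ne_zero]
          have hx1 := @xplus_parity r s x
          have hy1 := @xplus_parity r s y
          have hx2 : EvZ (x : ZMod r × ZMod s).2 ↔
              (EvZ (y : ZMod r × ZMod s).2 ↔ EvZ (((q:ℕ)) : ZMod s)) := by
            rw [hc, evZ_add hgs.two_dvd hgs.ne_zero]
          have hqodd := not_evZ_q hsq hoq hq2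
          tauto
        obtain ⟨f, hf, hsh⟩ := hP _ hpar
        refine ⟨f * g, mul_mem hf hg, Subtype.ext ?_⟩
        have h2 := hsh (g y)
        show ((f (g y) : XPlus r s) : ZMod r × ZMod s) = _
        ext
        · rw [h2.1, (hκ y).1]
          simp [sgn]
        · rw [h2.2, (hκ y).2]
          simp [sgn, hc]
  · intro k
    obtain ⟨x, hx⟩ := exists_in_row hgr hgs ((k.val : ℕ) : ZMod s)
    exact ⟨x, by rw [hx]; exact red_lift hsq (by omega) k⟩
  · intro x y hadj
    rw [gammaPlus_adj_iff] at hadj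
    rcases hadj.2.2 with h | h
    · left
      rw [h, red_add hsq (by omega), red_one hsq (by omega)]
    · right
      have : (x : ZMod r × ZMod s).2 = (y : ZMod r × ZMod s).2 + 1 := by rw [h]; ring
      rw [this, red_add hsq (by omega), red_one hsq (by omega)]
  · intro k
    obtain ⟨x, hx⟩ := exists_in_row hgr hgs ((k.val : ℕ) : ZMod s)
    refine ⟨x, _, step_adj hgr hgs x, ?_, ?_⟩
    · rw [hx]; exact red_lift hsq (by omega) k
    · show (((((x : ZMod r × ZMod s).2 + 1).val : ℕ)) : ZMod q) = k + 1
      rw [red_add hsq (by omega), red_one hsq (by omega), hx, red_lift hsq (by omega) k]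

/-- paired-columns quotient: `C_p` where `r = 2p`. -/
lemma isoCycle_pairedCols (hgr : GoodN r) (hgs : GoodN s) {p : ℕ} (hp : p.Prime)
    (hop : Odd p) (hrp : r = 2*p) (L : Subgroup (Equiv.Perm (XPlus r s)))
    (hall : ∀ f ∈ L, (∃ β, IsShape f false false 0 β) ∨
      (∃ l, IsShape f false true (((p:ℕ)) : ZMod r) l ∧ ¬ EvZ l))
    (hQ : ∀ β : ZMod s, EvZ β → ∃ f ∈ L, IsShape f false false 0 β)
    (hglide : ∃ g ∈ L, ∃ l, IsShape g false true (((p:ℕ)) : ZMod r) l ∧ ¬ EvZ l) :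
    IsoCycle (quotientGraph (GammaPlus r s) L) := by
  have hp2 := hp.two_le
  have hp3 : 3 ≤ p := by
    rcases Nat.lt_or_ge p 3 with h | h
    · interval_cases p
      · exact absurd hop (by decide)
    · exact h
  apply isoCycle_of_fibers (GammaPlus r s) L p hp3
    (fun x => (((x : ZMod r × ZMod s).1.val : ℕ) : ZMod p))
  · intro x y
    constructor
    · rintro ⟨g, hg, rfl⟩
      rcases hall g hg with ⟨β, hβ⟩ | ⟨l, hl, _⟩
      · have h2 := (hβ y).1
        simp only [sgn] at h2
        rw [h2]
        norm_num
      · have h2 := (hl y).1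
        simp only [sgn] at h2
        rw [h2]
        norm_num
        rw [red_add hrp (by omega), red_q_eq_zero hrp (by omega)]
        ring
    · intro hxy
      rcases zmod_half_cases hp2 hrp _ _ hxy with hc | hc
      · have hpar : EvZ ((x : ZMod r × ZMod s).2 - (y : ZMod r × ZMod s).2) := by
          rw [evZ_sub hgs.two_dvd hgs.ne_zero]
          rw [← @xplus_parity r s x, ← @xplus_parity r s y, hc]
        obtain ⟨f, hf, hsh⟩ := hQ _ hpar
        refine ⟨f, hf, Subtype.ext ?_⟩
        have h2 := hsh y
        ext
        · rw [h2.1]; simp [sgn, hc]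
        · rw [h2.2]; simp [sgn]
      · obtain ⟨g, hg, l, hl, hlodd⟩ := hglide
        have hpar : EvZ ((x : ZMod r × ZMod s).2 - (-(y : ZMod r × ZMod s).2 + l)) := by
          rw [evZ_sub hgs.two_dvd hgs.ne_zero, evZ_add hgs.two_dvd hgs.ne_zero,
            evZ_neg hgs.two_dvd hgs.ne_zero]
          have hx1 := @xplus_parity r s x
          have hy1 := @xplus_parity r s y
          have hx2 : EvZ (x : ZMod r × ZMod s).1 ↔
              (EvZ (y : ZMod r × ZMod s).1 ↔ EvZ (((p:ℕ)) : ZMod r)) := by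
            rw [hc, evZ_add hgr.two_dvd hgr.ne_zero]
          have hpodd := not_evZ_q hrp hop hp2
          tauto
        obtain ⟨f, hf, hsh⟩ := hQ _ hpar
        refine ⟨f * g, mul_mem hf hg, Subtype.ext ?_⟩
        have h2 := hsh (g y)
        show ((f (g y) : XPlus r s) : ZMod r × ZMod s) = _
        ext
        · rw [h2.1, (hl y).1]
          simp [sgn, hc]
        · rw [h2.2, (hl y).2]
          simp [sgn]
  · intro k
    obtain ⟨x, hx⟩ := exists_in_col hgr hgs ((k.val : ℕ) : ZMod r)
    exact ⟨x, by rw [hx]; exact red_lift hrp (by omega) k⟩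
  · intro x y hadj
    rw [gammaPlus_adj_iff] at hadj
    rcases hadj.2.1 with h | h
    · left
      rw [h, red_add hrp (by omega), red_one hrp (by omega)]
    · right
      have : (x : ZMod r × ZMod s).1 = (y : ZMod r × ZMod s).1 + 1 := by rw [h]; ring
      rw [this, red_add hrp (by omega), red_one hrp (by omega)]
  · intro k
    obtain ⟨x, hx⟩ := exists_in_col hgr hgs ((k.val : ℕ) : ZMod r)
    refine ⟨x, _, step_adj hgr hgs x, ?_, ?_⟩
    · rw [hx]; exact red_lift hrp (by omega) k
    · show (((((x : ZMod r × ZMod s).1 + 1).val : ℕ)) : ZMod p) = k + 1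
      rw [red_add hrp (by omega), red_one hrp (by omega), hx, red_lift hrp (by omega) k]

end pairedAux
section LTsec

variable {r s : ℕ}

lemma isShape_param_congr {f : Equiv.Perm (XPlus r s)} {e₁ e₂ e₁' e₂' : Bool}
    {k k' : ZMod r} {l l' : ZMod s} (h : IsShape f e₁ e₂ k l)
    (he1 : e₁ = e₁') (he2 : e₂ = e₂') (hk : k = k') (hl : l = l') :
    IsShape f e₁' e₂' k' l' := by
  subst he1; subst he2; subst hk; subst hl; exact h

/-- the set of translations in `L`. -/
def LTr (L : Subgroup (Equiv.Perm (XPlus r s))) (α : ZMod r) (β : ZMod s) : Prop :=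
  ∃ f ∈ L, IsShape f false false α β

lemma LTr_one (L : Subgroup (Equiv.Perm (XPlus r s))) : LTr L 0 0 :=
  ⟨1, one_mem L, isShape_one⟩

lemma LTr_mul {L : Subgroup (Equiv.Perm (XPlus r s))} {α α' : ZMod r} {β β' : ZMod s}
    (h1 : LTr L α β) (h2 : LTr L α' β') : LTr L (α + α') (β + β') := by
  obtain ⟨f, hf, hsf⟩ := h1
  obtain ⟨g, hg, hsg⟩ := h2
  exact ⟨f * g, mul_mem hf hg, isShape_param_congr (isShape_mul hsf hsg) rfl rfl
    (by simp [sgn]; try ring) (by simp [sgn]; try ring)⟩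

lemma LTr_inv {L : Subgroup (Equiv.Perm (XPlus r s))} {α : ZMod r} {β : ZMod s}
    (h : LTr L α β) : LTr L (-α) (-β) := by
  obtain ⟨f, hf, hsf⟩ := h
  exact ⟨f⁻¹, inv_mem hf, isShape_param_congr (isShape_inv hsf) rfl rfl
    (by simp [sgn]) (by simp [sgn])⟩

lemma LTr_nsmul {L : Subgroup (Equiv.Perm (XPlus r s))} {α : ZMod r} {β : ZMod s}
    (h : LTr L α β) : ∀ n : ℕ, LTr L ((n : ZMod r) * α) ((n : ZMod s) * β) := by
  intro n
  induction n with
  | zero => simpa using LTr_one L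
  | succ n ih =>
    have h2 := LTr_mul ih h
    have e1 : (((n+1 : ℕ)) : ZMod r) * α = (n : ZMod r) * α + α := by push_cast; ring
    have e2 : (((n+1 : ℕ)) : ZMod s) * β = (n : ZMod s) * β + β := by push_cast; ring
    rw [e1, e2]
    exact h2

lemma LTr_even {L : Subgroup (Equiv.Perm (XPlus r s))} (hgr : GoodN r) (hgs : GoodN s)
    (hsub : ∀ f ∈ L, Shaped f) {α : ZMod r} {β : ZMod s} (h : LTr L α β) :
    EvZ α ∧ EvZ β := by
  obtain ⟨f, hf, hsf⟩ := h
  obtain ⟨e₁, e₂, k, l, hsf', hk, hl⟩ := hsub f hf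
  obtain ⟨he1, he2, hkk, hll⟩ := isShape_unique hgr hgs hsf hsf'
  constructor
  · rw [hkk]; rw [hk, ← he1, ← he2]
  · rw [hll]; rw [hl, ← he1, ← he2]

variable (hre : 2 ∣ r) (hr0 : r ≠ 0) (hse : 2 ∣ s) (hs0 : s ≠ 0)

/-- conjugation by `τ`. -/
lemma conj_tau_shape {f : Equiv.Perm (XPlus r s)} {e₁ e₂ : Bool} {k : ZMod r} {l : ZMod s}
    (hf : IsShape f e₁ e₂ k l) :
    IsShape (tauP r s hre hr0 hse hs0 * f * (tauP r s hre hr0 hse hs0)⁻¹) e₁ e₂ (-k) (-l) := by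
  have h := isShape_mul (isShape_mul (isShape_tauP hre hr0 hse hs0) hf)
    (isShape_inv (isShape_tauP hre hr0 hse hs0))
  exact isShape_param_congr h (by cases e₁ <;> rfl) (by cases e₂ <;> rfl)
    (by cases e₁ <;> simp [sgn] <;> try ring) (by cases e₂ <;> simp [sgn] <;> try ring)

/-- conjugation by `μ²`. -/
lemma conj_a_shape {f : Equiv.Perm (XPlus r s)} {e₁ e₂ : Bool} {k : ZMod r} {l : ZMod s}
    (hf : IsShape f e₁ e₂ k l) :
    IsShape (muSqP r s hre hr0 * f * (muSqP r s hre hr0)⁻¹) e₁ e₂ (k + 2 - 2 * sgn e₁ r) l := by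
  have h := isShape_mul (isShape_mul (isShape_muSqP hre hr0) hf)
    (isShape_inv (isShape_muSqP hre hr0))
  exact isShape_param_congr h (by cases e₁ <;> rfl) (by cases e₂ <;> rfl)
    (by cases e₁ <;> simp [sgn] <;> try ring) (by cases e₂ <;> simp [sgn] <;> try ring)

/-- conjugation by `σμν`. -/
lemma conj_b_shape {f : Equiv.Perm (XPlus r s)} {e₁ e₂ : Bool} {k : ZMod r} {l : ZMod s}
    (hf : IsShape f e₁ e₂ k l) :
    IsShape (sigmaMuNuP r s hre hr0 hse hs0 * f * (sigmaMuNuP r s hre hr0 hse hs0)⁻¹)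
      e₁ e₂ (sgn e₁ r - k - 1) (l + 1 - sgn e₂ s) := by
  have h := isShape_mul (isShape_mul (isShape_sigmaMuNuP hre hr0 hse hs0) hf)
    (isShape_inv (isShape_sigmaMuNuP hre hr0 hse hs0))
  exact isShape_param_congr h (by cases e₁ <;> rfl) (by cases e₂ <;> rfl)
    (by cases e₁ <;> simp [sgn] <;> try ring) (by cases e₂ <;> simp [sgn] <;> try ring)

variable {L : Subgroup (Equiv.Perm (XPlus r s))}

/-- commutator with `τ`. -/
lemma comm_tau (hct : ∀ f ∈ L, tauP r s hre hr0 hse hs0 * f * (tauP r s hre hr0 hse hs0)⁻¹ ∈ L)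
    {f : Equiv.Perm (XPlus r s)} (hfL : f ∈ L) {e₁ e₂ : Bool} {k : ZMod r} {l : ZMod s}
    (hf : IsShape f e₁ e₂ k l) : LTr L (-(2*k)) (-(2*l)) := by
  refine ⟨_ * f⁻¹, mul_mem (hct f hfL) (inv_mem hfL), ?_⟩
  have h := isShape_mul (conj_tau_shape hre hr0 hse hs0 hf) (isShape_inv hf)
  exact isShape_param_congr h (by cases e₁ <;> rfl) (by cases e₂ <;> rfl)
    (by cases e₁ <;> simp [sgn] <;> try ring) (by cases e₂ <;> simp [sgn] <;> try ring)

/-- commutator with `μ²`. -/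
lemma comm_a (hca : ∀ f ∈ L, muSqP r s hre hr0 * f * (muSqP r s hre hr0)⁻¹ ∈ L)
    {f : Equiv.Perm (XPlus r s)} (hfL : f ∈ L) {e₁ e₂ : Bool} {k : ZMod r} {l : ZMod s}
    (hf : IsShape f e₁ e₂ k l) : LTr L (2 - 2 * sgn e₁ r) 0 := by
  refine ⟨_ * f⁻¹, mul_mem (hca f hfL) (inv_mem hfL), ?_⟩
  have h := isShape_mul (conj_a_shape hre hr0 hf) (isShape_inv hf)
  exact isShape_param_congr h (by cases e₁ <;> rfl) (by cases e₂ <;> rfl)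
    (by cases e₁ <;> simp [sgn] <;> try ring) (by cases e₂ <;> simp [sgn] <;> try ring)

/-- commutator with `σμν`. -/
lemma comm_b
    (hcb : ∀ f ∈ L, sigmaMuNuP r s hre hr0 hse hs0 * f * (sigmaMuNuP r s hre hr0 hse hs0)⁻¹ ∈ L)
    {f : Equiv.Perm (XPlus r s)} (hfL : f ∈ L) {e₁ e₂ : Bool} {k : ZMod r} {l : ZMod s}
    (hf : IsShape f e₁ e₂ k l) : LTr L (sgn e₁ r - 2*k - 1) (1 - sgn e₂ s) := by
  refine ⟨_ * f⁻¹, mul_mem (hcb f hfL) (inv_mem hfL), ?_⟩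
  have h := isShape_mul (conj_b_shape hre hr0 hse hs0 hf) (isShape_inv hf)
  exact isShape_param_congr h (by cases e₁ <;> rfl) (by cases e₂ <;> rfl)
    (by cases e₁ <;> simp [sgn] <;> try ring) (by cases e₂ <;> simp [sgn] <;> try ring)

/-- conjugation by `σμν` on translations. -/
lemma LTr_conjb
    (hcb : ∀ f ∈ L, sigmaMuNuP r s hre hr0 hse hs0 * f * (sigmaMuNuP r s hre hr0 hse hs0)⁻¹ ∈ L)
    {α : ZMod r} {β : ZMod s} (h : LTr L α β) : LTr L (-α) β := by
  obtain ⟨f, hf, hsf⟩ := h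
  refine ⟨_, hcb f hf, ?_⟩
  have h2 := conj_b_shape hre hr0 hse hs0 hsf
  exact isShape_param_congr h2 rfl rfl (by simp [sgn]; try ring) (by simp [sgn])
end LTsec
section diagSec

/-- the cyclic coordinate for the diagonal quotient on `X⁺(4,4)`. -/
def cRaw (u : ZMod 4 × ZMod 4) : ZMod 4 := u.1 - u.2 + ((u.1.val % 2 : ℕ) : ZMod 4)

lemma shape_apply {r s : ℕ} {f : Equiv.Perm (XPlus r s)} {e₁ e₂ : Bool} {k : ZMod r}
    {l : ZMod s} (hf : IsShape f e₁ e₂ k l) (x : XPlus r s) :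
    ((f x : XPlus r s) : ZMod r × ZMod s) =
      (sgn e₁ r * (x : ZMod r × ZMod s).1 + k, sgn e₂ s * (x : ZMod r × ZMod s).2 + l) := by
  have h := hf x
  exact Prod.ext h.1 h.2

lemma Rch_comp {V : Type*} {L : Subgroup (Equiv.Perm V)} {f : Equiv.Perm V} (hf : f ∈ L)
    {u w : V} (h : ∃ g ∈ L, g u = w) : ∃ g ∈ L, g u = f w := by
  obtain ⟨g, hg, rfl⟩ := h
  exact ⟨f * g, mul_mem hf hg, rfl⟩

lemma pt00_mem44 : ((0,0) : ZMod 4 × ZMod 4) ∈ XPlus 4 4 := by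
  rw [mem_XPlus]; try decide
lemma pt11_mem44 : ((1,1) : ZMod 4 × ZMod 4) ∈ XPlus 4 4 := by
  rw [mem_XPlus]; try decide
lemma pt20_mem44 : ((2,0) : ZMod 4 × ZMod 4) ∈ XPlus 4 4 := by
  rw [mem_XPlus]; try decide

lemma diag_case (L : Subgroup (Equiv.Perm (XPlus 4 4)))
    (hca : ∀ f ∈ L, muSqP 4 4 (by norm_num) (by norm_num) * f *
      (muSqP 4 4 (by norm_num) (by norm_num))⁻¹ ∈ L)
    (hcb : ∀ f ∈ L, sigmaMuNuP 4 4 (by norm_num) (by norm_num) (by norm_num) (by norm_num) * f *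
      (sigmaMuNuP 4 4 (by norm_num) (by norm_num) (by norm_num) (by norm_num))⁻¹ ∈ L)
    (hct : ∀ f ∈ L, tauP 4 4 (by norm_num) (by norm_num) (by norm_num) (by norm_num) * f *
      (tauP 4 4 (by norm_num) (by norm_num) (by norm_num) (by norm_num))⁻¹ ∈ L)
    (hsub : ∀ f ∈ L, Shaped f)
    (hT22 : LTr L (2 : ZMod 4) (2 : ZMod 4))
    (hnP : ∀ γ' : ZMod 4, EvZ γ' → LTr L γ' 0 → γ' ≠ 0 → False)
    (hnQ : ∀ δ' : ZMod 4, EvZ δ' → LTr L 0 δ' → δ' ≠ 0 → False) :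
    Nat.card (Quotient (orbitSetoid L)) ≤ 2 ∨
      IsoCycle (quotientGraph (GammaPlus 4 4) L) := by
  obtain ⟨t, htL, hts⟩ := hT22
  have htapp : ∀ z : XPlus 4 4, ((t z : XPlus 4 4) : ZMod 4 × ZMod 4) =
      ((z : ZMod 4 × ZMod 4).1 + 2, (z : ZMod 4 × ZMod 4).2 + 2) := by
    intro z
    rw [shape_apply hts]
    show (sgn false 4 * _ + 2, sgn false 4 * _ + 2) = _
    simp [sgn]
  -- "parity" of an element of ZMod 4
  have evz4 : ∀ a : ZMod 4, EvZ a ↔ (a = 0 ∨ a = 2) := by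
    unfold EvZ; decide
  by_cases hpres : ∀ f ∈ L, ∀ x : XPlus 4 4, cRaw ((f x : XPlus 4 4) : ZMod 4 × ZMod 4) =
      cRaw (x : ZMod 4 × ZMod 4)
  · -- quotient is C4
    right
    apply isoCycle_of_fibers (GammaPlus 4 4) L 4 (by norm_num)
      (fun x => cRaw (x : ZMod 4 × ZMod 4))
    · intro x y
      constructor
      · rintro ⟨g, hg, rfl⟩
        exact hpres g hg y
      · intro hxy
        have hF1 : ∀ u v : ZMod 4 × ZMod 4, u.1.val % 2 = u.2.val % 2 →
            v.1.val % 2 = v.2.val % 2 → cRaw u = cRaw v →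
            (u = v ∨ (u.1 = v.1 + 2 ∧ u.2 = v.2 + 2)) := by decide
        rcases hF1 _ _ x.2 y.2 hxy with h | h
        · exact ⟨1, one_mem L, Subtype.ext h.symm⟩
        · refine ⟨t, htL, Subtype.ext ?_⟩
          rw [htapp y]
          exact Prod.ext h.1.symm h.2.symm
    · intro k
      have hF2 : ∀ k : ZMod 4, ∃ u : ZMod 4 × ZMod 4,
          u.1.val % 2 = u.2.val % 2 ∧ cRaw u = k := by decide
      obtain ⟨u, hu, hc⟩ := hF2 k
      exact ⟨⟨u, hu⟩, hc⟩
    · intro x y hadj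
      rw [gammaPlus_adj_iff] at hadj
      have hF3 : ∀ u v : ZMod 4 × ZMod 4, u.1.val % 2 = u.2.val % 2 →
          v.1.val % 2 = v.2.val % 2 →
          ((v.1 = u.1 + 1 ∨ v.1 = u.1 - 1) ∧ (v.2 = u.2 + 1 ∨ v.2 = u.2 - 1)) →
          (cRaw v = cRaw u + 1 ∨ cRaw u = cRaw v + 1) := by decide
      exact hF3 _ _ x.2 y.2 hadj.2
    · intro k
      have hF4 : ∀ k : ZMod 4, ∃ u v : ZMod 4 × ZMod 4, u.1.val % 2 = u.2.val % 2 ∧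
          v.1.val % 2 = v.2.val % 2 ∧ u ≠ v ∧
          ((v.1 = u.1 + 1 ∨ v.1 = u.1 - 1) ∧ (v.2 = u.2 + 1 ∨ v.2 = u.2 - 1)) ∧
          cRaw u = k ∧ cRaw v = k + 1 := by decide
      obtain ⟨u, v, hu, hv, hne, hrel, hcu, hcv⟩ := hF4 k
      refine ⟨⟨u, hu⟩, ⟨v, hv⟩, ?_, hcu, hcv⟩
      rw [gammaPlus_adj_iff]
      exact ⟨fun hc => hne (congrArg Subtype.val hc), hrel⟩
  · -- some element does not preserve cRaw : two orbits
    left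
    push_neg at hpres
    obtain ⟨f, hfL, x, hx⟩ := hpres
    obtain ⟨e₁, e₂, k, l, hsf, hk, hl⟩ := hsub f hfL
    by_cases hee : e₁ = e₂
    · -- same signs
      subst hee
      match e₁, hsf, hk, hl with
      | false, hsf, hk, hl =>
        -- translation : always preserves cRaw, contradiction
        exfalso
        have hke : EvZ k := hk.mpr rfl
        have hle : EvZ l := hl.mpr rfl
        have hkl : (k = 0 ∧ l = 0) ∨ (k = 2 ∧ l = 2) := by
          rcases (evz4 k).mp hke with rfl | rfl
          · left
            refine ⟨rfl, ?_⟩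
            by_contra hlne
            exact hnQ l hle ⟨f, hfL, hsf⟩ hlne
          · right
            refine ⟨rfl, ?_⟩
            rcases (evz4 l).mp hle with rfl | rfl
            · exact absurd ⟨f, hfL, hsf⟩ (fun h => hnP 2 hke h (by decide))
            · rfl
        have hF5 : ∀ u : ZMod 4 × ZMod 4, u.1.val % 2 = u.2.val % 2 →
            ∀ k l : ZMod 4, ((k = 0 ∧ l = 0) ∨ (k = 2 ∧ l = 2)) →
            cRaw (u.1 + k, u.2 + l) = cRaw u := by decide
        apply hx
        rw [shape_apply hsf]
        have := hF5 _ x.2 k l hkl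
        show cRaw (sgn false 4 * _ + k, sgn false 4 * _ + l) = _
        simpa [sgn] using this
      | true, hsf, hk, hl =>
        -- central symmetry type
        have hke : EvZ k := hk.mpr rfl
        have hle : EvZ l := hl.mpr rfl
        have hF7 : ∀ u : ZMod 4 × ZMod 4, u.1.val % 2 = u.2.val % 2 →
            ∀ k l : ZMod 4, (k = 0 ∨ k = 2) → (l = 0 ∨ l = 2) →
            cRaw (-u.1 + k, -u.2 + l) = cRaw u + (k - l) := by decide
        have hfx : ∀ z : XPlus 4 4, cRaw ((f z : XPlus 4 4) : ZMod 4 × ZMod 4) =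
            cRaw (z : ZMod 4 × ZMod 4) + (k - l) := by
          intro z
          rw [shape_apply hsf]
          have := hF7 _ z.2 k l ((evz4 k).mp hke) ((evz4 l).mp hle)
          show cRaw (sgn true 4 * _ + k, sgn true 4 * _ + l) = _
          simpa [sgn] using this
        have hklne : k - l ≠ 0 := by
          intro hc
          apply hx
          rw [hfx x, hc, add_zero]
        have hF8 : ∀ k l : ZMod 4, (k = 0 ∨ k = 2) → (l = 0 ∨ l = 2) → k - l ≠ 0 →
            ((k = 2 ∧ l = 0) ∨ (k = 0 ∧ l = 2)) := by decide
        have hkl := hF8 k l ((evz4 k).mp hke) ((evz4 l).mp hle) hklne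
        -- two orbits, represented by (0,0) and (1,1)
        apply card_quot_le_two L ⟨(0,0), pt00_mem44⟩ ⟨(1,1), pt11_mem44⟩
        intro z
        -- the value f(0,0) = (k,l), f(1,1) = (k-1, l-1)
        have hf00 : ((f ⟨(0,0), pt00_mem44⟩ : XPlus 4 4) : ZMod 4 × ZMod 4) = (k, l) := by
          rw [shape_apply hsf]
          show (sgn true 4 * 0 + k, sgn true 4 * 0 + l) = _
          simp [sgn]
        have hf11 : ((f ⟨(1,1), pt11_mem44⟩ : XPlus 4 4) : ZMod 4 × ZMod 4) = (k-1, l-1) := by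
          rw [shape_apply hsf]
          show (sgn true 4 * 1 + k, sgn true 4 * 1 + l) = _
          simp [sgn]
          constructor <;> ring
        have hF9 : ∀ u : ZMod 4 × ZMod 4, u.1.val % 2 = u.2.val % 2 →
            (u = (0,0) ∨ u = (2,2)) ∨ (u = (2,0) ∨ u = (0,2)) ∨
            (u = (1,1) ∨ u = (3,3)) ∨ (u = (3,1) ∨ u = (1,3)) := by decide
        rcases hF9 _ z.2 with (h | h) | (h | h) | (h | h) | (h | h)
        · left; exact ⟨1, one_mem L, Subtype.ext h.symm⟩
        · left; refine ⟨t, htL, Subtype.ext ?_⟩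
          rw [htapp, h]
          try decide
        · -- z = (2,0)
          left
          rcases hkl with ⟨rfl, rfl⟩ | ⟨rfl, rfl⟩
          · exact ⟨f, hfL, Subtype.ext (by rw [hf00, h])⟩
          · refine ⟨t * f, mul_mem htL hfL, Subtype.ext ?_⟩
            show ((t (f _) : XPlus 4 4) : ZMod 4 × ZMod 4) = _
            rw [htapp, hf00, h]
            try decide
        · -- z = (0,2)
          left
          rcases hkl with ⟨rfl, rfl⟩ | ⟨rfl, rfl⟩
          · refine ⟨t * f, mul_mem htL hfL, Subtype.ext ?_⟩
            show ((t (f _) : XPlus 4 4) : ZMod 4 × ZMod 4) = _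
            rw [htapp, hf00, h]
            try decide
          · exact ⟨f, hfL, Subtype.ext (by rw [hf00, h])⟩
        · right; exact ⟨1, one_mem L, Subtype.ext h.symm⟩
        · right; refine ⟨t, htL, Subtype.ext ?_⟩
          rw [htapp, h]
          try decide
        · -- z = (3,1)
          right
          rcases hkl with ⟨rfl, rfl⟩ | ⟨rfl, rfl⟩
          · -- f(1,1) = (1,-1) = (1,3) ; t of that = (3,1)
            refine ⟨t * f, mul_mem htL hfL, Subtype.ext ?_⟩
            show ((t (f _) : XPlus 4 4) : ZMod 4 × ZMod 4) = _
            rw [htapp, hf11, h]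
            try decide
          · -- f(1,1) = (-1,1) = (3,1)
            exact ⟨f, hfL, Subtype.ext (by rw [hf11, h]; try decide)⟩
        · -- z = (1,3)
          right
          rcases hkl with ⟨rfl, rfl⟩ | ⟨rfl, rfl⟩
          · exact ⟨f, hfL, Subtype.ext (by rw [hf11, h]; try decide)⟩
          · refine ⟨t * f, mul_mem htL hfL, Subtype.ext ?_⟩
            show ((t (f _) : XPlus 4 4) : ZMod 4 × ZMod 4) = _
            rw [htapp, hf11, h]
            try decide
    · -- opposite signs : parity swap
      have hko : ¬ EvZ k := fun hc => hee (hk.mp hc)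
      have hlo : ¬ EvZ l := fun hc => hee (hl.mp hc)
      apply card_quot_le_two L ⟨(0,0), pt00_mem44⟩ ⟨(2,0), pt20_mem44⟩
      -- even points are reachable
      have heven : ∀ z : XPlus 4 4, EvZ (z : ZMod 4 × ZMod 4).1 →
          (∃ g ∈ L, g ⟨(0,0), pt00_mem44⟩ = z) ∨ (∃ g ∈ L, g ⟨(2,0), pt20_mem44⟩ = z) := by
        intro z hz
        have hF9e : ∀ u : ZMod 4 × ZMod 4, u.1.val % 2 = u.2.val % 2 → u.1.val % 2 = 0 →
            (u = (0,0) ∨ u = (2,2)) ∨ (u = (2,0) ∨ u = (0,2)) := by decide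
        rcases hF9e _ z.2 hz with (h | h) | (h | h)
        · left; exact ⟨1, one_mem L, Subtype.ext h.symm⟩
        · left; refine ⟨t, htL, Subtype.ext ?_⟩
          rw [htapp, h]
          decide
        · right; exact ⟨1, one_mem L, Subtype.ext h.symm⟩
        · right; refine ⟨t, htL, Subtype.ext ?_⟩
          rw [htapp, h]
          decide
      intro z
      by_cases hz : EvZ (z : ZMod 4 × ZMod 4).1
      · rcases heven z hz with h | h
        · exact Or.inl h
        · exact Or.inr h
      · -- odd point : pull back through f
        have hw : EvZ ((f⁻¹ z : XPlus 4 4) : ZMod 4 × ZMod 4).1 := by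
          have hsf' := isShape_inv hsf
          rw [(hsf' z).1]
          rw [evZ_add (by norm_num) (by norm_num), evZ_sgn_mul (by norm_num) (by norm_num)]
          rw [evZ_neg (by norm_num) (by norm_num), evZ_sgn_mul (by norm_num) (by norm_num)]
          tauto
        have hz' : z = f (f⁻¹ z) := (f.apply_symm_apply z).symm
        rcases heven _ hw with h | h
        · left; rw [hz']; exact Rch_comp hfL h
        · right; rw [hz']; exact Rch_comp hfL h
end diagSec
lemma evZ_two_torsion {n : ℕ} (hg : GoodN n) {a : ZMod n} (he : EvZ a) (h2 : 2 * a = 0) :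
    a = 0 ∨ (n = 4 ∧ a = 2) := by
  haveI : NeZero n := ⟨hg.ne_zero⟩
  have h4 := hg.four_le
  have hcast : ((a.val : ℕ) : ZMod n) = a := by rw [ZMod.natCast_val, ZMod.cast_id]
  have hval : ((2 * a.val : ℕ) : ZMod n) = 0 := by
    rw [Nat.cast_mul, hcast]; exact_mod_cast h2
  rw [ZMod.natCast_eq_zero_iff] at hval
  have hlt : a.val < n := ZMod.val_lt a
  obtain ⟨c, hc⟩ := hval
  have hc2 : c ≤ 1 := by nlinarith
  unfold EvZ at he
  interval_cases c
  · rw [mul_zero] at hc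
    left
    have hv : a.val = 0 := by omega
    rw [← hcast, hv]
    norm_num
  · rw [mul_one] at hc
    rcases hg with rfl | ⟨p, hp, hop, rfl⟩
    · right
      refine ⟨rfl, ?_⟩
      rw [← hcast]
      have hv : a.val = 2 := by omega
      rw [hv]
      norm_num
    · exfalso
      have hv : a.val = p := by omega
      have := Nat.odd_iff.mp hop
      omega

section classifySec

variable {r s : ℕ}

lemma four_eq_zero_imp {n : ℕ} (hg : GoodN n) (h : (4 : ZMod n) = 0) : n = 4 := by
  by_contra hc
  exact goodN_four_ne_zero hg hc h

/-- generation of all horizontal translations. -/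
lemma predP_of (hgr : GoodN r) {L : Subgroup (Equiv.Perm (XPlus r s))}
    {γ : ZMod r} (h : LTr L γ 0) (hγe : EvZ γ) (hγ : γ ≠ 0) :
    ∀ γ' : ZMod r, EvZ γ' → LTr L γ' 0 := by
  intro γ' hγ'
  obtain ⟨t, ht⟩ := goodN_gen hgr hγe hγ hγ'
  have h2 := LTr_nsmul h t
  rw [mul_zero] at h2
  rwa [ht] at h2

lemma predQ_of (hgs : GoodN s) {L : Subgroup (Equiv.Perm (XPlus r s))}
    {δ : ZMod s} (h : LTr L 0 δ) (hδe : EvZ δ) (hδ : δ ≠ 0) :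
    ∀ δ' : ZMod s, EvZ δ' → LTr L 0 δ' := by
  intro δ' hδ'
  obtain ⟨t, ht⟩ := goodN_gen hgs hδe hδ hδ'
  have h2 := LTr_nsmul h t
  rw [mul_zero] at h2
  rwa [ht] at h2

theorem classify (hgr : GoodN r) (hgs : GoodN s)
    (hre : 2 ∣ r) (hr0 : r ≠ 0) (hse : 2 ∣ s) (hs0 : s ≠ 0)
    (L : Subgroup (Equiv.Perm (XPlus r s)))
    (hLH : NormalIn L (HPlusGroup r s hre hr0 hse hs0))
    (hne : L ≠ ⊥) :
    Nat.card (Quotient (orbitSetoid L)) ≤ 2 ∨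
      IsoCycle (quotientGraph (GammaPlus r s) L) := by
  obtain ⟨hle, hnorm⟩ := hLH
  have haH : muSqP r s hre hr0 ∈ HPlusGroup r s hre hr0 hse hs0 :=
    Subgroup.subset_closure (by simp)
  have hbH : sigmaMuNuP r s hre hr0 hse hs0 ∈ HPlusGroup r s hre hr0 hse hs0 :=
    Subgroup.subset_closure (by simp)
  have htH : tauP r s hre hr0 hse hs0 ∈ HPlusGroup r s hre hr0 hse hs0 :=
    Subgroup.subset_closure (by simp)
  have hca : ∀ f ∈ L, muSqP r s hre hr0 * f * (muSqP r s hre hr0)⁻¹ ∈ L :=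
    fun f hf => hnorm _ haH f hf
  have hcb : ∀ f ∈ L, sigmaMuNuP r s hre hr0 hse hs0 * f *
      (sigmaMuNuP r s hre hr0 hse hs0)⁻¹ ∈ L := fun f hf => hnorm _ hbH f hf
  have hct : ∀ f ∈ L, tauP r s hre hr0 hse hs0 * f * (tauP r s hre hr0 hse hs0)⁻¹ ∈ L :=
    fun f hf => hnorm _ htH f hf
  have hsub : ∀ f ∈ L, Shaped f := fun f hf => shaped_of_mem_HPlus hre hr0 hse hs0 (hle hf)
  -- step A: a nontrivial translation
  have hTnt : ∃ α β, LTr L α β ∧ ¬(α = 0 ∧ β = 0) := by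
    obtain ⟨f, hfL, hf1⟩ : ∃ f ∈ L, f ≠ 1 := by
      by_contra hc
      push_neg at hc
      exact hne ((Subgroup.eq_bot_iff_forall L).mpr hc)
    obtain ⟨e₁, e₂, k, l, hsf, hk, hl⟩ := hsub f hfL
    match e₁, e₂, hsf, hk, hl with
    | false, false, hsf, hk, hl =>
      refine ⟨k, l, ⟨f, hfL, hsf⟩, ?_⟩
      rintro ⟨rfl, rfl⟩
      exact hf1 (eq_of_isShape hsf isShape_one)
    | true, false, hsf, hk, hl =>
      by_cases h4 : (4 : ZMod r) = 0
      · -- r = 4, use the τ-commutator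
        have hr4 := four_eq_zero_imp hgr h4
        have hcomm := comm_tau hre hr0 hse hs0 hct hfL hsf
        refine ⟨-(2*k), -(2*l), hcomm, ?_⟩
        rintro ⟨h1, -⟩
        have h2k : 2 * k = 0 := by linear_combination -h1
        have hkodd : ¬ EvZ k := by rw [hk]; simp
        obtain ⟨q, hq, hoq, hrq, -⟩ := goodN_half_odd hgr hkodd h2k
        rw [hr4] at hrq
        have : q = 2 := by omega
        rw [this] at hoq
        exact (by decide : ¬ Odd 2) hoq
      · have hcomm := comm_a hre hr0 hca hfL hsf
        refine ⟨2 - 2 * sgn true r, 0, hcomm, ?_⟩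
        rintro ⟨h1, -⟩
        apply h4
        have : sgn true r = -1 := rfl
        rw [this] at h1
        linear_combination h1
    | e₁, true, hsf, hk, hl =>
      have hcomm := comm_b hre hr0 hse hs0 hcb hfL hsf
      refine ⟨_, _, hcomm, ?_⟩
      rintro ⟨-, h1⟩
      have : sgn true s = -1 := rfl
      rw [this] at h1
      exact goodN_two_ne_zero hgs (by linear_combination h1)
  obtain ⟨α, β, hT, hnz⟩ := hTnt
  have hTe := LTr_even hgr hgs hsub hT
  -- derived translations
  have hP2 : LTr L (2*α) 0 := by
    have h1 := LTr_mul hT (LTr_inv (LTr_conjb hre hr0 hse hs0 hcb hT))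
    rw [neg_neg, add_neg_cancel] at h1
    rw [two_mul]
    exact h1
  have hQ2 : LTr L 0 (2*β) := by
    have h1 := LTr_mul (LTr_conjb hre hr0 hse hs0 hcb hT) hT
    rw [neg_add_cancel] at h1
    rw [two_mul]
    exact h1
  -- main case split
  by_cases hPall : ∀ γ' : ZMod r, EvZ γ' → LTr L γ' 0
  · -- P holds
    by_cases hQall : ∀ δ' : ZMod s, EvZ δ' → LTr L 0 δ'
    · -- both: at most 2 orbits
      left
      apply card_quot_le_two L ⟨(0,0), pt00_mem hgr.ne_zero hgs.ne_zero⟩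
        ⟨(1,1), pt11_mem hgr.four_le hgs.four_le⟩
      intro z
      by_cases hz : EvZ (z : ZMod r × ZMod s).1
      · left
        have hz2 : EvZ (z : ZMod r × ZMod s).2 := (@xplus_parity r s z).mp hz
        obtain ⟨f, hf, hsf⟩ := LTr_mul (hPall _ hz) (hQall _ hz2)
        rw [add_zero, zero_add] at hsf
        refine ⟨f, hf, Subtype.ext ?_⟩
        have h2 := hsf ⟨(0,0), pt00_mem hgr.ne_zero hgs.ne_zero⟩
        ext
        · rw [h2.1]; simp [sgn]
        · rw [h2.2]; simp [sgn]
      · right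
        have hz2 : ¬ EvZ (z : ZMod r × ZMod s).2 := fun hc => hz ((@xplus_parity r s z).mpr hc)
        have he1 : EvZ ((z : ZMod r × ZMod s).1 - 1) := by
          rw [evZ_sub hgr.two_dvd hgr.ne_zero]
          simp [hz, not_evZ_one hgr.two_dvd hgr.ne_zero]
        have he2 : EvZ ((z : ZMod r × ZMod s).2 - 1) := by
          rw [evZ_sub hgs.two_dvd hgs.ne_zero]
          simp [hz2, not_evZ_one hgs.two_dvd hgs.ne_zero]
        obtain ⟨f, hf, hsf⟩ := LTr_mul (hPall _ he1) (hQall _ he2)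
        rw [add_zero, zero_add] at hsf
        refine ⟨f, hf, Subtype.ext ?_⟩
        have h2 := hsf ⟨(1,1), pt11_mem hgr.four_le hgs.four_le⟩
        ext
        · rw [h2.1]; simp [sgn]; try ring
        · rw [h2.2]; simp [sgn]; try ring
    · -- P and not Q : rows or paired rows
      right
      -- translations have trivial second component
      have hBzero : ∀ α' β', LTr L α' β' → β' = 0 := by
        intro α' β' h
        by_contra hb
        obtain ⟨he1', he2'⟩ := LTr_even hgr hgs hsub h
        have h0 : LTr L 0 β' := by
          have := LTr_mul (hPall (-α') (by rwa [evZ_neg hgr.two_dvd hgr.ne_zero])) h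
          rwa [neg_add_cancel, zero_add] at this
        exact hQall (predQ_of hgs h0 he2' hb)
      -- no element with second sign reversed
      have hnoc : ∀ f ∈ L, ∀ e₁ k l, ¬ IsShape f e₁ true k l := by
        intro f hf e₁ k l hsf
        have hcomm := comm_b hre hr0 hse hs0 hcb hf hsf
        have := hBzero _ _ hcomm
        have hs2 : sgn true s = -1 := rfl
        rw [hs2] at this
        exact goodN_two_ne_zero hgs (by linear_combination this)
      -- glide analysis
      by_cases hglide : ∃ g ∈ L, ∃ κ l', IsShape g true false κ l'
      · -- paired rows
        obtain ⟨g, hg, κ, l', hsg⟩ := hglide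
        obtain ⟨e₁', e₂', k', l'', hsg', hk', hl'⟩ := hsub g hg
        obtain ⟨hee1, hee2, hkk, hll⟩ := isShape_unique hgr hgs hsg hsg'
        have hκodd : ¬ EvZ κ := by rw [hkk, hk', ← hee1, ← hee2]; simp
        have hlodd : ¬ EvZ l' := by rw [hll, hl', ← hee1, ← hee2]; simp
        have h2l : 2 * l' = 0 := by
          have hcomm := comm_tau hre hr0 hse hs0 hct hg hsg
          have := hBzero _ _ hcomm
          linear_combination -this
        obtain ⟨q, hq, hoq, hsq, hlq⟩ := goodN_half_odd hgs hlodd h2l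
        apply isoCycle_pairedRows hgr hgs hq hoq hsq L ?_ hPall ⟨g, hg, κ, by rwa [← hlq], hκodd⟩
        -- hall
        intro f hf
        obtain ⟨e₁, e₂, k, l, hsf, hk, hl⟩ := hsub f hf
        match e₁, e₂, hsf, hk, hl with
        | e₁, true, hsf, hk, hl => exact absurd hsf (hnoc f hf e₁ k l)
        | false, false, hsf, hk, hl =>
          left
          have : l = 0 := hBzero k l ⟨f, hf, hsf⟩
          exact ⟨k, by rwa [this] at hsf⟩
        | true, false, hsf, hk, hl =>
          right
          have hkodd : ¬ EvZ k := by rw [hk]; simp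
          have hlodd2 : ¬ EvZ l := by rw [hl]; simp
          have h2l2 : 2 * l = 0 := by
            have hcomm := comm_tau hre hr0 hse hs0 hct hf hsf
            have := hBzero _ _ hcomm
            linear_combination -this
          obtain ⟨q2, hq2, hoq2, hsq2, hlq2⟩ := goodN_half_odd hgs hlodd2 h2l2
          have : q2 = q := by omega
          rw [this] at hlq2
          exact ⟨k, by rwa [← hlq2], hkodd⟩
      · -- rows
        apply isoCycle_rows hgr hgs L ?_ hPall
        intro f hf
        obtain ⟨e₁, e₂, k, l, hsf, hk, hl⟩ := hsub f hf
        match e₁, e₂, hsf, hk, hl with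
        | e₁, true, hsf, hk, hl => exact absurd hsf (hnoc f hf e₁ k l)
        | true, false, hsf, hk, hl => exact absurd ⟨f, hf, k, l, hsf⟩ hglide
        | false, false, hsf, hk, hl =>
          have : l = 0 := hBzero k l ⟨f, hf, hsf⟩
          exact ⟨k, by rwa [this] at hsf⟩
  · by_cases hQall : ∀ δ' : ZMod s, EvZ δ' → LTr L 0 δ'
    · -- Q and not P : columns or paired columns
      right
      have hAzero : ∀ α' β', LTr L α' β' → α' = 0 := by
        intro α' β' h
        by_contra ha
        obtain ⟨he1', he2'⟩ := LTr_even hgr hgs hsub h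
        have h0 : LTr L α' 0 := by
          have := LTr_mul h (hQall (-β') (by rwa [evZ_neg hgs.two_dvd hgs.ne_zero]))
          rwa [add_neg_cancel, add_zero] at this
        exact hPall (predP_of hgr h0 he1' ha)
      -- no element with first sign reversed
      have hnob : ∀ f ∈ L, ∀ e₂ k l, ¬ IsShape f true e₂ k l := by
        intro f hf e₂ k l hsf
        have hcomm := comm_a hre hr0 hca hf hsf
        have h1 := hAzero _ _ hcomm
        have hs2 : sgn true r = -1 := rfl
        rw [hs2] at h1
        have h4 : (4 : ZMod r) = 0 := by linear_combination h1
        have hr4 := four_eq_zero_imp hgr h4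
        -- now τ-commutator gives 2k = 0 with k odd... need k odd: but e₂ arbitrary
        have hcomm2 := comm_tau hre hr0 hse hs0 hct hf hsf
        have h2 := hAzero _ _ hcomm2
        have h2k : 2 * k = 0 := by linear_combination -h2
        -- parity of k from Shaped
        obtain ⟨e₁', e₂', k', l'', hsf', hk', hl'⟩ := hsub f hf
        obtain ⟨hee1, hee2, hkk, hll⟩ := isShape_unique hgr hgs hsf hsf'
        by_cases hke : EvZ k
        · -- then e₂ = true too, so covered by hnoc-type argument: comm_b second comp
          have he2t : e₂ = true := by
            have := hk'
            rw [← hkk, ← hee1, ← hee2] at this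
            have h3 := this.mp hke
            exact h3.symm
          -- comm_b : second component 1 - sgn true = 2 must be 0? no: use first component
          -- first component of comm_b : sgn true - 2k - 1 = -2k - 2; hAzero gives -2k-2=0
          have hcomm3 := comm_b hre hr0 hse hs0 hcb hf hsf
          have h3 := hAzero _ _ hcomm3
          rw [hs2] at h3
          -- -1 - 2k - 1 = 0, so 2(k+1) = 0 with k+1 odd, r = 4 : contradiction
          have h4' : 2 * (k + 1) = 0 := by linear_combination -h3
          have hko : ¬ EvZ (k+1) := by
            rw [evZ_add hgr.two_dvd hgr.ne_zero]
            simp [hke, not_evZ_one hgr.two_dvd hgr.ne_zero]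
          obtain ⟨q, hq, hoq, hrq, -⟩ := goodN_half_odd hgr hko h4'
          rw [hr4] at hrq
          have : q = 2 := by omega
          rw [this] at hoq
          exact (by decide : ¬ Odd 2) hoq
        · obtain ⟨q, hq, hoq, hrq, -⟩ := goodN_half_odd hgr hke h2k
          rw [hr4] at hrq
          have : q = 2 := by omega
          rw [this] at hoq
          exact (by decide : ¬ Odd 2) hoq
      by_cases hglide : ∃ g ∈ L, ∃ κ l', IsShape g false true κ l'
      · -- paired columns
        obtain ⟨g, hg, κ, l', hsg⟩ := hglide
        obtain ⟨e₁', e₂', k', l'', hsg', hk', hl'⟩ := hsub g hg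
        obtain ⟨hee1, hee2, hkk, hll⟩ := isShape_unique hgr hgs hsg hsg'
        have hκodd : ¬ EvZ κ := by rw [hkk, hk', ← hee1, ← hee2]; simp
        have hlodd : ¬ EvZ l' := by rw [hll, hl', ← hee1, ← hee2]; simp
        have h2k : 2 * κ = 0 := by
          have hcomm := comm_b hre hr0 hse hs0 hcb hg hsg
          have h1 := hAzero _ _ hcomm
          have hs2 : sgn false r = 1 := rfl
          rw [hs2] at h1
          linear_combination -h1
        obtain ⟨p, hp, hop, hrp, hkp⟩ := goodN_half_odd hgr hκodd h2k
        apply isoCycle_pairedCols hgr hgs hp hop hrp L ?_ hQall ⟨g, hg, l', by rwa [← hkp], hlodd⟩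
        intro f hf
        obtain ⟨e₁, e₂, k, l, hsf, hk, hl⟩ := hsub f hf
        match e₁, e₂, hsf, hk, hl with
        | true, e₂, hsf, hk, hl => exact absurd hsf (hnob f hf e₂ k l)
        | false, false, hsf, hk, hl =>
          left
          have : k = 0 := hAzero k l ⟨f, hf, hsf⟩
          exact ⟨l, by rwa [this] at hsf⟩
        | false, true, hsf, hk, hl =>
          right
          have hkodd : ¬ EvZ k := by rw [hk]; simp
          have hlodd2 : ¬ EvZ l := by rw [hl]; simp
          have h2k2 : 2 * k = 0 := by
            have hcomm := comm_b hre hr0 hse hs0 hcb hf hsf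
            have h1 := hAzero _ _ hcomm
            have hs2 : sgn false r = 1 := rfl
            rw [hs2] at h1
            linear_combination -h1
          obtain ⟨p2, hp2, hop2, hrp2, hkp2⟩ := goodN_half_odd hgr hkodd h2k2
          have : p2 = p := by omega
          rw [this] at hkp2
          exact ⟨l, by rwa [← hkp2], hlodd2⟩
      · -- columns
        apply isoCycle_cols hgr hgs L ?_ hQall
        intro f hf
        obtain ⟨e₁, e₂, k, l, hsf, hk, hl⟩ := hsub f hf
        match e₁, e₂, hsf, hk, hl with
        | true, e₂, hsf, hk, hl => exact absurd hsf (hnob f hf e₂ k l)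
        | false, true, hsf, hk, hl => exact absurd ⟨f, hf, k, l, hsf⟩ hglide
        | false, false, hsf, hk, hl =>
          have : k = 0 := hAzero k l ⟨f, hf, hsf⟩
          exact ⟨l, by rwa [this] at hsf⟩
    · -- neither P nor Q : the diagonal case, r = s = 4
      -- first derive r = 4, s = 4, LTr L 2 2
      have hα2 : 2 * α = 0 := by
        by_contra hc
        exact hPall (predP_of hgr hP2 (evZ_double hgr.two_dvd hgr.ne_zero α) hc)
      have hβ2 : 2 * β = 0 := by
        by_contra hc
        exact hQall (predQ_of hgs hQ2 (evZ_double hgs.two_dvd hgs.ne_zero β) hc)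
      have hαne : α ≠ 0 := by
        rintro rfl
        have hβne : β ≠ 0 := fun hc => hnz ⟨rfl, hc⟩
        exact hQall (predQ_of hgs hT hTe.2 hβne)
      have hβne : β ≠ 0 := by
        rintro rfl
        exact hPall (predP_of hgr hT hTe.1 hαne)
      obtain ⟨hr4, hα⟩ := (evZ_two_torsion hgr hTe.1 hα2).resolve_left hαne
      obtain ⟨hs4, hβ⟩ := (evZ_two_torsion hgs hTe.2 hβ2).resolve_left hβne
      rw [hα, hβ] at hT
      subst hr4
      subst hs4
      exact diag_case L hca hcb hct hsub hT
        (fun γ' hγ' hLγ hn => hPall (predP_of hgr hLγ hγ' hn))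
        (fun δ' hδ' hLδ hn => hQall (predQ_of hgs hLδ hδ' hn))

end classifySec
section assembleSec

variable {r s : ℕ}

lemma isShape_pow {f : Equiv.Perm (XPlus r s)} {α : ZMod r} {β : ZMod s}
    (hf : IsShape f false false α β) :
    ∀ n : ℕ, IsShape (f ^ n) false false ((n : ZMod r) * α) ((n : ZMod s) * β) := by
  intro n
  induction n with
  | zero => exact isShape_param_congr isShape_one rfl rfl (by push_cast; ring) (by push_cast; ring)
  | succ n ih =>
    rw [pow_succ]
    exact isShape_param_congr (isShape_mul ih hf) rfl rfl
      (by push_cast; simp [sgn]; ring) (by push_cast; simp [sgn]; ring)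

/-- the subgroup of horizontal translations. -/
def Krow (r s : ℕ) : Subgroup (Equiv.Perm (XPlus r s)) where
  carrier := {f | ∃ α, IsShape f false false α 0}
  one_mem' := ⟨0, isShape_one⟩
  mul_mem' := by
    rintro f g ⟨α, hα⟩ ⟨α', hα'⟩
    exact ⟨α + α', isShape_param_congr (isShape_mul hα hα') rfl rfl
      (by simp [sgn]; ring) (by simp [sgn])⟩
  inv_mem' := by
    rintro f ⟨α, hα⟩
    exact ⟨-α, isShape_param_congr (isShape_inv hα) rfl rfl (by simp [sgn]) (by simp [sgn])⟩

/-- the subgroup of vertical translations. -/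
def Kcol (r s : ℕ) : Subgroup (Equiv.Perm (XPlus r s)) where
  carrier := {f | ∃ β, IsShape f false false 0 β}
  one_mem' := ⟨0, isShape_one⟩
  mul_mem' := by
    rintro f g ⟨β, hβ⟩ ⟨β', hβ'⟩
    exact ⟨β + β', isShape_param_congr (isShape_mul hβ hβ') rfl rfl
      (by simp [sgn]) (by simp [sgn]; ring)⟩
  inv_mem' := by
    rintro f ⟨β, hβ⟩
    exact ⟨-β, isShape_param_congr (isShape_inv hβ) rfl rfl (by simp [sgn]) (by simp [sgn])⟩

lemma shape_row_even (hgr : GoodN r) (hgs : GoodN s) {f : Equiv.Perm (XPlus r s)}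
    {α : ZMod r} (hf : IsShape f false false α 0) : EvZ α := by
  have h := (hf ⟨(0,0), pt00_mem hgr.ne_zero hgs.ne_zero⟩).1
  have hmem := (f ⟨(0,0), pt00_mem hgr.ne_zero hgs.ne_zero⟩).2
  rw [mem_XPlus_evZ] at hmem
  have h2 := (hf ⟨(0,0), pt00_mem hgr.ne_zero hgs.ne_zero⟩).2
  rw [h, h2] at hmem
  simp only [sgn] at hmem
  norm_num at hmem
  exact hmem.mpr (evZ_zero hgs.ne_zero)

lemma shape_col_even (hgr : GoodN r) (hgs : GoodN s) {f : Equiv.Perm (XPlus r s)}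
    {β : ZMod s} (hf : IsShape f false false 0 β) : EvZ β := by
  have h := (hf ⟨(0,0), pt00_mem hgr.ne_zero hgs.ne_zero⟩).1
  have hmem := (f ⟨(0,0), pt00_mem hgr.ne_zero hgs.ne_zero⟩).2
  rw [mem_XPlus_evZ] at hmem
  have h2 := (hf ⟨(0,0), pt00_mem hgr.ne_zero hgs.ne_zero⟩).2
  rw [h, h2] at hmem
  simp only [sgn] at hmem
  norm_num at hmem
  exact hmem.mp (evZ_zero hgr.ne_zero)

variable (hre : 2 ∣ r) (hr0 : r ≠ 0) (hse : 2 ∣ s) (hs0 : s ≠ 0)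

lemma muSq_closure_le : Subgroup.closure {muSqP r s hre hr0} ≤ Krow r s := by
  rw [Subgroup.closure_le]
  rintro f rfl
  exact ⟨2, isShape_muSqP hre hr0⟩

lemma nuSq_closure_le : Subgroup.closure {nuSqP r s hse hs0} ≤ Kcol r s := by
  rw [Subgroup.closure_le]
  rintro f rfl
  exact ⟨2, isShape_nuSqP hse hs0⟩

lemma muSq_P (hgr : GoodN r) : ∀ α : ZMod r, EvZ α →
    ∃ f ∈ Subgroup.closure {muSqP r s hre hr0}, IsShape f false false α 0 := by
  intro α hα
  obtain ⟨n, hn⟩ := goodN_gen hgr (evZ_two hre hr0) (goodN_two_ne_zero hgr) hα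
  refine ⟨muSqP r s hre hr0 ^ n, pow_mem (Subgroup.subset_closure (Set.mem_singleton _)) n, ?_⟩
  have := isShape_pow (isShape_muSqP (s := s) hre hr0) n
  rw [mul_zero] at this
  rwa [hn] at this

lemma nuSq_Q (hgs : GoodN s) : ∀ β : ZMod s, EvZ β →
    ∃ f ∈ Subgroup.closure {nuSqP r s hse hs0}, IsShape f false false 0 β := by
  intro β hβ
  obtain ⟨n, hn⟩ := goodN_gen hgs (evZ_two hse hs0) (goodN_two_ne_zero hgs) hβ
  refine ⟨nuSqP r s hse hs0 ^ n, pow_mem (Subgroup.subset_closure (Set.mem_singleton _)) n, ?_⟩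
  have := isShape_pow (isShape_nuSqP (r := r) hse hs0) n
  rw [mul_zero] at this
  rwa [hn] at this

lemma muSq_quot_cycle (hgr : GoodN r) (hgs : GoodN s) :
    IsoCycle (quotientGraph (GammaPlus r s) (Subgroup.closure {muSqP r s hre hr0})) := by
  apply isoCycle_rows hgr hgs
  · intro f hf
    exact muSq_closure_le hre hr0 hf
  · exact muSq_P hre hr0 hgr

lemma nuSq_quot_cycle (hgr : GoodN r) (hgs : GoodN s) :
    IsoCycle (quotientGraph (GammaPlus r s) (Subgroup.closure {nuSqP r s hse hs0})) := by
  apply isoCycle_cols hgr hgs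
  · intro f hf
    exact nuSq_closure_le hse hs0 hf
  · exact nuSq_Q hse hs0 hgs

lemma muSq_normalIn (hgr : GoodN r) (hgs : GoodN s) :
    NormalIn (Subgroup.closure {muSqP r s hre hr0}) (HPlusGroup r s hre hr0 hse hs0) := by
  constructor
  · apply Subgroup.closure_mono
    intro x hx
    rw [hx]
    simp
  · intro h hH n hn
    obtain ⟨e₁, e₂, k, l, hsh, hk, hl⟩ := shaped_of_mem_HPlus hre hr0 hse hs0 hH
    obtain ⟨α, hα⟩ := muSq_closure_le hre hr0 hn
    have hαe := shape_row_even hgr hgs hα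
    have hconj : IsShape (h * n * h⁻¹) false false (sgn e₁ r * α) 0 := by
      have h2 := isShape_mul (isShape_mul hsh hα) (isShape_inv hsh)
      exact isShape_param_congr h2 (by cases e₁ <;> rfl) (by cases e₂ <;> rfl)
        (by cases e₁ <;> simp [sgn] <;> try ring) (by cases e₂ <;> simp [sgn] <;> try ring)
    obtain ⟨f, hf, hsf⟩ := muSq_P hre hr0 hgr (sgn e₁ r * α)
      ((evZ_sgn_mul hre hr0 e₁ α).mpr hαe)
    rw [eq_of_isShape hconj hsf]
    exact hf

lemma muSq_closure_ne_bot (hgr : GoodN r) (hgs : GoodN s) :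
    Subgroup.closure {muSqP r s hre hr0} ≠ ⊥ := by
  intro hc
  have hmem : muSqP r s hre hr0 ∈ Subgroup.closure {muSqP r s hre hr0} :=
    Subgroup.subset_closure (Set.mem_singleton _)
  rw [hc, Subgroup.mem_bot] at hmem
  have h1 := (isShape_muSqP hre hr0 (r := r) (s := s) ⟨(0,0), pt00_mem hgr.ne_zero hgs.ne_zero⟩).1
  rw [hmem] at h1
  simp only [sgn, Equiv.Perm.one_apply] at h1
  norm_num at h1
  exact goodN_two_ne_zero hgr h1.symm

end assembleSec
/-- for `(r,s)` of the form `(4,4)`, `(4,2p)`, `(2p,4)` or `(2p,2q)` with `p`,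
`q` odd primes, every normal quotient of `(Γ⁺(r,s), H⁺(r,s))` by a nontrivial normal
subgroup is degenerate, the quotients by `⟨μ²⟩` and `⟨ν²⟩` are cycles, and the pair is basic
of cycle type. -/
theorem stmt8 (r s : ℕ) (hre : 2 ∣ r) (hr0 : r ≠ 0) (hse : 2 ∣ s) (hs0 : s ≠ 0)
    (h : (r = 4 ∧ s = 4) ∨ (∃ p : ℕ, p.Prime ∧ Odd p ∧ r = 4 ∧ s = 2 * p) ∨
      (∃ p : ℕ, p.Prime ∧ Odd p ∧ r = 2 * p ∧ s = 4) ∨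
      (∃ p q : ℕ, p.Prime ∧ Odd p ∧ q.Prime ∧ Odd q ∧ r = 2 * p ∧ s = 2 * q)) :
    (∀ L : Subgroup (Equiv.Perm (XPlus r s)),
      NormalIn L (HPlusGroup r s hre hr0 hse hs0) → L ≠ ⊥ →
      Nat.card (Quotient (orbitSetoid L)) ≤ 2 ∨ IsoCycle (quotientGraph (GammaPlus r s) L)) ∧
    IsoCycle (quotientGraph (GammaPlus r s) (Subgroup.closure {muSqP r s hre hr0})) ∧
    IsoCycle (quotientGraph (GammaPlus r s) (Subgroup.closure {nuSqP r s hse hs0})) ∧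
    BasicOfCycleType (GammaPlus r s) (HPlusGroup r s hre hr0 hse hs0) := by
  have hgr : GoodN r := by
    rcases h with ⟨rfl, rfl⟩ | ⟨p, hp, hop, rfl, rfl⟩ | ⟨p, hp, hop, rfl, rfl⟩ |
      ⟨p, q, hp, hop, hq, hoq, rfl, rfl⟩
    · exact Or.inl rfl
    · exact Or.inl rfl
    · exact Or.inr ⟨p, hp, hop, rfl⟩
    · exact Or.inr ⟨p, hp, hop, rfl⟩
  have hgs : GoodN s := by
    rcases h with ⟨rfl, rfl⟩ | ⟨p, hp, hop, rfl, rfl⟩ | ⟨p, hp, hop, rfl, rfl⟩ |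
      ⟨p, q, hp, hop, hq, hoq, rfl, rfl⟩
    · exact Or.inl rfl
    · exact Or.inr ⟨p, hp, hop, rfl⟩
    · exact Or.inl rfl
    · exact Or.inr ⟨q, hq, hoq, rfl⟩
  refine ⟨?_, ?_, ?_, ?_, ?_⟩
  · intro L hn hb
    exact classify hgr hgs hre hr0 hse hs0 L hn hb
  · exact muSq_quot_cycle hre hr0 hgr hgs
  · exact nuSq_quot_cycle hse hs0 hgr hgs
  · intro L hn hb
    exact classify hgr hgs hre hr0 hse hs0 L hn hb
  · exact ⟨Subgroup.closure {muSqP r s hre hr0}, muSq_normalIn hre hr0 hse hs0 hgr hgs,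
      muSq_closure_ne_bot hre hr0 hgr hgs, muSq_quot_cycle hre hr0 hgr hgs⟩

end OG4
end
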